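/- arXiv:1407.1473 — 3 statements merged into one kernel-verified Lean document; each statement's English description precedes it below -/
import Mathlib

section
/- Every 0-simplifying Tarski monoid is piecewise factorizable. -/
universe u

/-- An inverse monoid with zero: every element `a` has a unique generalized
inverse `a⁻¹`, and `0` is an absorbing element. -/
class InverseMonoidWithZero (S : Type u) extends Monoid S, Zero S, Inv S where
  zero_mul' : ∀ a : S, 0 * a = 0
  mul_zero' : ∀ a : S, a * 0 = 0
  mul_inv_mul : ∀ a : S, a * a⁻¹ * a = a
  inv_mul_inv : ∀ a : S, a⁻¹ * a * a⁻¹ = a⁻¹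
  inv_unique : ∀ a b : S, a * b * a = a → b * a * b = b → b = a⁻¹

section BasicDefs

variable {S : Type u}

/-- The natural partial order: `a ≤ b` iff `a = e * b` for some idempotent `e`. -/
def nle [InverseMonoidWithZero S] (a b : S) : Prop :=
  ∃ e : S, e * e = e ∧ a = e * b

/-- `a` and `b` are compatible if `a * b⁻¹` and `a⁻¹ * b` are idempotents. -/
def Compat [InverseMonoidWithZero S] (a b : S) : Prop :=
  (a * b⁻¹) * (a * b⁻¹) = a * b⁻¹ ∧ (a⁻¹ * b) * (a⁻¹ * b) = a⁻¹ * b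

/-- `a` and `b` are orthogonal if `a * b⁻¹ = 0` and `a⁻¹ * b = 0`. -/
def Orth [InverseMonoidWithZero S] (a b : S) : Prop :=
  a * b⁻¹ = 0 ∧ a⁻¹ * b = 0

end BasicDefs

/-- A distributive inverse monoid: every compatible pair has a join (for the
natural partial order), recorded by `sup`, and multiplication distributes over
these binary joins. -/
class DistributiveInverseMonoid (S : Type u) extends InverseMonoidWithZero S where
  sup : S → S → S
  le_sup_left : ∀ a b : S, Compat a b → nle a (sup a b)
  le_sup_right : ∀ a b : S, Compat a b → nle b (sup a b)
  sup_le : ∀ a b c : S, Compat a b → nle a c → nle b c → nle (sup a b) c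
  mul_sup : ∀ a b c : S, Compat a b → c * sup a b = sup (c * a) (c * b)
  sup_mul : ∀ a b c : S, Compat a b → sup a b * c = sup (a * c) (b * c)

/-- A Boolean inverse monoid: a distributive inverse monoid whose idempotents
form a Boolean algebra under the natural partial order; `compl` records the
complementation on idempotents. -/
class BooleanInverseMonoid (S : Type u) extends DistributiveInverseMonoid S where
  compl : S → S
  compl_idem : ∀ e : S, e * e = e → compl e * compl e = compl e
  mul_compl : ∀ e : S, e * e = e → e * compl e = 0
  sup_compl : ∀ e : S, e * e = e → sup e (compl e) = 1

/-- A Boolean inverse ∧-monoid: a Boolean inverse monoid in which every pair of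
elements has a meet with respect to the natural partial order. -/
class BooleanInverseMeetMonoid (S : Type u) extends BooleanInverseMonoid S where
  inf : S → S → S
  inf_le_left : ∀ a b : S, nle (inf a b) a
  inf_le_right : ∀ a b : S, nle (inf a b) b
  le_inf : ∀ a b c : S, nle c a → nle c b → nle c (inf a b)

section MoreDefs

variable {S : Type u}

/-- The join of a compatible pair. -/
def bsup [DistributiveInverseMonoid S] (a b : S) : S := DistributiveInverseMonoid.sup a b

/-- Complementation in the Boolean algebra of idempotents. -/
def bcompl [BooleanInverseMonoid S] (e : S) : S := BooleanInverseMonoid.compl e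

/-- The binary meet. -/
def binf [BooleanInverseMeetMonoid S] (a b : S) : S := BooleanInverseMeetMonoid.inf a b

/-- The fixed-point operator `φ(s) = s ∧ 1`. -/
def phi [BooleanInverseMeetMonoid S] (s : S) : S := binf s 1

/-- The support operator `σ(s) = \overline{φ(s)} ⋅ s⁻¹ s`. -/
def sigma [BooleanInverseMeetMonoid S] (s : S) : S := bcompl (phi s) * (s⁻¹ * s)

/-- An infinitesimal is a non-zero element that squares to zero. -/
def Infinitesimal [InverseMonoidWithZero S] (a : S) : Prop := a ≠ 0 ∧ a * a = 0

/-- A (two-sided) ideal. -/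
def IsMIdeal [InverseMonoidWithZero S] (I : Set S) : Prop :=
  I.Nonempty ∧ ∀ a ∈ I, ∀ s : S, s * a ∈ I ∧ a * s ∈ I

/-- A ∨-ideal: an ideal closed under joins of compatible pairs. -/
def IsVIdeal [DistributiveInverseMonoid S] (I : Set S) : Prop :=
  IsMIdeal I ∧ ∀ a ∈ I, ∀ b ∈ I, Compat a b → bsup a b ∈ I

end MoreDefs

/-- 0-simplifying: the only ∨-ideals are `{0}` and `S`. -/
def ZeroSimplifying (S : Type u) [DistributiveInverseMonoid S] : Prop :=
  ∀ I : Set S, IsVIdeal I → I = {0} ∨ I = Set.univ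

/-- 0-simple: non-trivial and the only ideals are `{0}` and `S`. -/
def ZeroSimple (S : Type u) [InverseMonoidWithZero S] : Prop :=
  (∃ s : S, s ≠ 0) ∧ ∀ I : Set S, IsMIdeal I → I = {0} ∨ I = Set.univ

/-- Fundamental: every element commuting with all idempotents is an idempotent. -/
def Fundamental (S : Type u) [InverseMonoidWithZero S] : Prop :=
  ∀ a : S, (∀ e : S, e * e = e → a * e = e * a) → a * a = a

/-- The Boolean algebra of idempotents is atomless. -/
def IdemAtomless (S : Type u) [InverseMonoidWithZero S] : Prop :=
  ∀ e : S, e * e = e → e ≠ 0 → ∃ f : S, f * f = f ∧ f ≠ 0 ∧ nle f e ∧ f ≠ e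

section Filters

variable {S : Type u}

/-- A filter in a Boolean inverse ∧-monoid: a nonempty subset closed under
binary meets and upward closed in the natural partial order. -/
def IsMFilter [BooleanInverseMeetMonoid S] (A : Set S) : Prop :=
  A.Nonempty ∧ (∀ a ∈ A, ∀ b ∈ A, binf a b ∈ A) ∧ ∀ a ∈ A, ∀ b : S, nle a b → b ∈ A

/-- An ultrafilter: a maximal proper filter. -/
def IsMUltrafilter [BooleanInverseMeetMonoid S] (A : Set S) : Prop :=
  IsMFilter A ∧ (0 : S) ∉ A ∧ ∀ B : Set S, IsMFilter B → (0 : S) ∉ B → A ⊆ B → A = B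

/-- A filter of the Boolean algebra of idempotents (meet of idempotents is
their product). -/
def IsIdemFilter [InverseMonoidWithZero S] (F : Set S) : Prop :=
  F.Nonempty ∧ (∀ e ∈ F, e * e = e) ∧ (∀ e ∈ F, ∀ f ∈ F, e * f ∈ F) ∧
    ∀ e ∈ F, ∀ f : S, f * f = f → nle e f → f ∈ F

/-- An ultrafilter of the Boolean algebra of idempotents. -/
def IsIdemUltrafilter [InverseMonoidWithZero S] (F : Set S) : Prop :=
  IsIdemFilter F ∧ (0 : S) ∉ F ∧
    ∀ G : Set S, IsIdemFilter G → (0 : S) ∉ G → F ⊆ G → F = G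

end Filters

section PencilDefs

variable {S : Type u}

/-- `Preceq e f`: there is a pencil from `e` to `f`, i.e. finitely many
elements `x₁, …, xₘ` with `r(xᵢ) ≤ f` for all `i` and `e = ⋁ d(xᵢ)`
(a least upper bound for the natural partial order). -/
def Preceq [DistributiveInverseMonoid S] (e f : S) : Prop :=
  ∃ l : List S, l ≠ [] ∧ (∀ x ∈ l, nle (x * x⁻¹) f) ∧
    (∀ x ∈ l, nle (x⁻¹ * x) e) ∧ ∀ c : S, (∀ x ∈ l, nle (x⁻¹ * x) c) → nle e c

/-- Piecewise factorizable: every element is a finite join of elements each of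
which lies beneath a unit. -/
def PiecewiseFactorizable (S : Type u) [DistributiveInverseMonoid S] : Prop :=
  ∀ s : S, ∃ l : List S, l ≠ [] ∧ (∀ x ∈ l, ∃ g : S, IsUnit g ∧ nle x g) ∧
    (∀ x ∈ l, nle x s) ∧ ∀ c : S, (∀ x ∈ l, nle x c) → nle s c

/-- A properly infinite idempotent. -/
def ProperlyInfinite [DistributiveInverseMonoid S] (e : S) : Prop :=
  ∃ x y : S, x⁻¹ * x = e ∧ y⁻¹ * y = e ∧ Orth (x * x⁻¹) (y * y⁻¹) ∧
    nle (bsup (x * x⁻¹) (y * y⁻¹)) e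

end PencilDefs

/-- Purely infinite: every non-zero idempotent is properly infinite. -/
def PurelyInfinite (S : Type u) [DistributiveInverseMonoid S] : Prop :=
  ∀ e : S, e * e = e → e ≠ 0 → ProperlyInfinite e

namespace S11

variable {S : Type u} [BooleanInverseMeetMonoid S]

/-! ### Basic inverse monoid calculus -/

lemma zmul (a : S) : (0:S) * a = 0 := InverseMonoidWithZero.zero_mul' a
lemma mulz (a : S) : a * (0:S) = 0 := InverseMonoidWithZero.mul_zero' a
lemma miv (a : S) : a * a⁻¹ * a = a := InverseMonoidWithZero.mul_inv_mul a
lemma ivm (a : S) : a⁻¹ * a * a⁻¹ = a⁻¹ := InverseMonoidWithZero.inv_mul_inv a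
lemma inv_uniq {a b : S} (h1 : a * b * a = a) (h2 : b * a * b = b) : b = a⁻¹ :=
  InverseMonoidWithZero.inv_unique a b h1 h2

lemma inv_invol (a : S) : a⁻¹⁻¹ = a := (inv_uniq (ivm a) (miv a)).symm

lemma inv_zero' : (0:S)⁻¹ = 0 :=
  (inv_uniq (a := (0:S)) (b := (0:S)) (by rw [zmul, zmul]) (by rw [zmul, zmul])).symm
lemma inv_one' : (1:S)⁻¹ = 1 :=
  (inv_uniq (a := (1:S)) (b := (1:S)) (by rw [one_mul, one_mul]) (by rw [one_mul, one_mul])).symm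

lemma idem_inv {e : S} (he : e * e = e) : e⁻¹ = e :=
  (inv_uniq (a := e) (b := e) (by rw [he, he]) (by rw [he, he])).symm

lemma dd_idem (a : S) : (a⁻¹ * a) * (a⁻¹ * a) = a⁻¹ * a := by
  have : a⁻¹ * (a * a⁻¹ * a) = a⁻¹ * a := by rw [miv]
  calc (a⁻¹ * a) * (a⁻¹ * a) = a⁻¹ * (a * a⁻¹ * a) := by
        rw [mul_assoc, ← mul_assoc a a⁻¹ a]
    _ = a⁻¹ * a := by rw [miv]

lemma rr_idem (a : S) : (a * a⁻¹) * (a * a⁻¹) = a * a⁻¹ := by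
  calc (a * a⁻¹) * (a * a⁻¹) = (a * a⁻¹ * a) * a⁻¹ := by
        rw [mul_assoc (a * a⁻¹) a a⁻¹]
    _ = a * a⁻¹ := by rw [miv]

/-- Product of idempotents is idempotent. -/
lemma idem_mul {e f : S} (he : e * e = e) (hf : f * f = f) :
    (e * f) * (e * f) = e * f := by
  set x := (e * f)⁻¹ with hx
  have hxefx : x * (e * f) * x = x := ivm (e * f)
  have hefxef : (e * f) * x * (e * f) = e * f := miv (e * f)
  -- fxe is idempotent
  have hid : (f * x * e) * (f * x * e) = f * x * e := by
    calc (f * x * e) * (f * x * e) = f * (x * (e * f) * x) * e := by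
          simp only [mul_assoc]
      _ = f * x * e := by rw [hxefx, mul_assoc]
  -- fxe is an inverse of ef
  have h1 : (e * f) * (f * x * e) * (e * f) = e * f := by
    have : (e * f) * (f * x * e) * (e * f) = e * ((f * f) * x * (e * e)) * f := by
      simp only [mul_assoc]
    rw [this, hf, he]
    have : e * (f * x * e) * f = (e * f) * x * (e * f) := by simp only [mul_assoc]
    rw [this, hefxef]
  have h2 : (f * x * e) * (e * f) * (f * x * e) = f * x * e := by
    have : (f * x * e) * (e * f) * (f * x * e) = f * (x * ((e * e) * (f * f)) * x) * e := by
      simp only [mul_assoc]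
    rw [this, he, hf]
    have h3 : x * (e * f) * x = x := hxefx
    have : f * (x * (e * f) * x) * e = f * x * e := by rw [h3]
    simp only [mul_assoc] at this ⊢
    exact this
  have hfxe : f * x * e = x := inv_uniq h1 h2
  -- so x is idempotent, and ef = x⁻¹ = x
  have hxid : x * x = x := by rw [hfxe] at hid; exact hid
  have : e * f = x⁻¹ := by rw [← inv_invol (e*f)]
  rw [this, idem_inv hxid, hxid]

/-- Idempotents commute. -/
lemma idem_comm {e f : S} (he : e * e = e) (hf : f * f = f) : e * f = f * e := by
  have hef := idem_mul he hf
  have hfe := idem_mul hf he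
  have h1 : (e * f) * (f * e) * (e * f) = e * f := by
    have : (e * f) * (f * e) * (e * f) = e * ((f * f) * (e * e)) * f := by
      simp only [mul_assoc]
    rw [this, hf, he]
    have : e * (f * e) * f = (e * f) * (e * f) := by simp only [mul_assoc]
    rw [this, hef]
  have h2 : (f * e) * (e * f) * (f * e) = f * e := by
    have : (f * e) * (e * f) * (f * e) = f * ((e * e) * (f * f)) * e := by
      simp only [mul_assoc]
    rw [this, he, hf]
    have : f * (e * f) * e = (f * e) * (f * e) := by simp only [mul_assoc]
    rw [this, hfe]
  have := inv_uniq h1 h2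
  rw [this, idem_inv hef]

lemma mul_inv_rev' (a b : S) : (a * b)⁻¹ = b⁻¹ * a⁻¹ := by
  symm
  apply inv_uniq
  · calc (a * b) * (b⁻¹ * a⁻¹) * (a * b)
        = a * ((b * b⁻¹) * (a⁻¹ * a)) * b := by simp only [mul_assoc]
      _ = a * ((a⁻¹ * a) * (b * b⁻¹)) * b := by rw [idem_comm (rr_idem b) (dd_idem a)]
      _ = (a * a⁻¹ * a) * (b * b⁻¹ * b) := by simp only [mul_assoc]
      _ = a * b := by rw [miv, miv]
  · calc (b⁻¹ * a⁻¹) * (a * b) * (b⁻¹ * a⁻¹)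
        = b⁻¹ * ((a⁻¹ * a) * (b * b⁻¹)) * a⁻¹ := by simp only [mul_assoc]
      _ = b⁻¹ * ((b * b⁻¹) * (a⁻¹ * a)) * a⁻¹ := by rw [idem_comm (dd_idem a) (rr_idem b)]
      _ = (b⁻¹ * b * b⁻¹) * (a⁻¹ * a * a⁻¹) := by simp only [mul_assoc]
      _ = b⁻¹ * a⁻¹ := by rw [ivm, ivm]

end S11
namespace S11

variable {S : Type u} [BooleanInverseMeetMonoid S]

/-! ### Rewriting toolkit -/

lemma sA (a x : S) : a * (a⁻¹ * (a * x)) = a * x := by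
  rw [← mul_assoc, ← mul_assoc, miv]
lemma sA' (a : S) : a * (a⁻¹ * a) = a := by rw [← mul_assoc, miv]
lemma sB (a x : S) : a⁻¹ * (a * (a⁻¹ * x)) = a⁻¹ * x := by
  rw [← mul_assoc, ← mul_assoc, ivm]
lemma sB' (a : S) : a⁻¹ * (a * a⁻¹) = a⁻¹ := by rw [← mul_assoc, ivm]

/-- commute two idempotents inside a right-associated chain -/
lemma swapI {e f : S} (he : e * e = e) (hf : f * f = f) (x : S) :
    e * (f * x) = f * (e * x) := by
  rw [← mul_assoc, idem_comm he hf, mul_assoc]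

lemma dupI {e : S} (he : e * e = e) (x : S) : e * (e * x) = e * x := by
  rw [← mul_assoc, he]

/-- move an idempotent through `b * b⁻¹` in a chain -/
lemma swapRR (b : S) {e : S} (he : e * e = e) (x : S) :
    e * (b * (b⁻¹ * x)) = b * (b⁻¹ * (e * x)) := by
  calc e * (b * (b⁻¹ * x)) = (e * (b * b⁻¹)) * x := by simp only [mul_assoc]
    _ = ((b * b⁻¹) * e) * x := by rw [idem_comm he (rr_idem b)]
    _ = b * (b⁻¹ * (e * x)) := by simp only [mul_assoc]

lemma swapDD (b : S) {e : S} (he : e * e = e) (x : S) :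
    e * (b⁻¹ * (b * x)) = b⁻¹ * (b * (e * x)) := by
  calc e * (b⁻¹ * (b * x)) = (e * (b⁻¹ * b)) * x := by simp only [mul_assoc]
    _ = ((b⁻¹ * b) * e) * x := by rw [idem_comm he (dd_idem b)]
    _ = b⁻¹ * (b * (e * x)) := by simp only [mul_assoc]

lemma commRR (b : S) {e : S} (he : e * e = e) :
    b * (b⁻¹ * e) = e * (b * b⁻¹) := by
  rw [← mul_assoc, idem_comm (rr_idem b) he]

lemma commDD (b : S) {e : S} (he : e * e = e) :
    b⁻¹ * (b * e) = e * (b⁻¹ * b) := by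
  rw [← mul_assoc, idem_comm (dd_idem b) he]

/-! ### The natural partial order -/

lemma nle_refl (a : S) : nle a a := ⟨a * a⁻¹, rr_idem a, (miv a).symm⟩

lemma nle_zero (a : S) : nle 0 a := ⟨0, by rw [zmul], (zmul a).symm⟩

lemma nle_zero_eq {a : S} (h : nle a 0) : a = 0 := by
  obtain ⟨E, _, hE⟩ := h; rw [hE, mulz]

lemma nle_one {e : S} (he : e * e = e) : nle e 1 := ⟨e, he, (mul_one e).symm⟩

lemma nle_trans {a b c : S} (h1 : nle a b) (h2 : nle b c) : nle a c := by
  obtain ⟨E, hE, hEe⟩ := h1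
  obtain ⟨F, hF, hFe⟩ := h2
  exact ⟨E * F, idem_mul hE hF, by rw [hEe, hFe, mul_assoc]⟩

lemma nle_lcanon {a b : S} (h : nle a b) : a = (a * a⁻¹) * b := by
  obtain ⟨E, hE, hEe⟩ := h
  have hai : a⁻¹ = b⁻¹ * E := by rw [hEe, mul_inv_rev', idem_inv hE]
  symm
  calc (a * a⁻¹) * b = E * (b * (b⁻¹ * (E * b))) := by
        rw [hai, hEe]; simp only [mul_assoc]
    _ = E * (E * (b * (b⁻¹ * b))) := by rw [← swapRR b hE b]
    _ = E * (E * b) := by rw [sA']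
    _ = E * b := dupI hE b
    _ = a := hEe.symm

lemma nle_rcanon {a b : S} (h : nle a b) : a = b * (a⁻¹ * a) := by
  obtain ⟨E, hE, hEe⟩ := h
  have hai : a⁻¹ = b⁻¹ * E := by rw [hEe, mul_inv_rev', idem_inv hE]
  symm
  calc b * (a⁻¹ * a) = b * (b⁻¹ * (E * (E * b))) := by
        rw [hai, hEe]; simp only [mul_assoc]
    _ = b * (b⁻¹ * (E * b)) := by rw [dupI hE]
    _ = E * (b * (b⁻¹ * b)) := by rw [swapRR b hE b]
    _ = E * b := by rw [sA']
    _ = a := hEe.symm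

lemma nle_of_r {a b m : S} (hm : m * m = m) (h : a = b * m) : nle a b := by
  refine ⟨b * m * b⁻¹, ?_, ?_⟩
  · calc (b * m * b⁻¹) * (b * m * b⁻¹) = b * (m * (b⁻¹ * (b * (m * b⁻¹)))) := by
          simp only [mul_assoc]
      _ = b * (b⁻¹ * (b * (m * (m * b⁻¹)))) := by rw [swapDD b hm (m * b⁻¹)]
      _ = b * (m * (m * b⁻¹)) := by rw [sA]
      _ = b * (m * b⁻¹) := by rw [dupI hm]
      _ = b * m * b⁻¹ := by rw [← mul_assoc]
  · rw [h]
    symm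
    calc (b * m * b⁻¹) * b = b * (m * (b⁻¹ * b)) := by simp only [mul_assoc]
      _ = b * (b⁻¹ * (b * m)) := by rw [commDD b hm]
      _ = b * m := by rw [sA]

lemma nle_antisymm {a b : S} (h1 : nle a b) (h2 : nle b a) : a = b := by
  have ha := nle_lcanon h1
  have hb := nle_lcanon h2
  have haa : a * a⁻¹ = (a * a⁻¹) * (b * b⁻¹) := by
    conv_lhs => rw [ha]
    rw [mul_inv_rev', idem_inv (rr_idem a)]
    calc (a * a⁻¹ * b) * (b⁻¹ * (a * a⁻¹))
        = (a * a⁻¹) * (b * (b⁻¹ * (a * a⁻¹))) := by simp only [mul_assoc]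
      _ = (a * a⁻¹) * ((a * a⁻¹) * (b * b⁻¹)) := by rw [commRR b (rr_idem a)]
      _ = (a * a⁻¹) * (b * b⁻¹) := by rw [dupI (rr_idem a)]
  have hbb : b * b⁻¹ = (b * b⁻¹) * (a * a⁻¹) := by
    conv_lhs => rw [hb]
    rw [mul_inv_rev', idem_inv (rr_idem b)]
    calc (b * b⁻¹ * a) * (a⁻¹ * (b * b⁻¹))
        = (b * b⁻¹) * (a * (a⁻¹ * (b * b⁻¹))) := by simp only [mul_assoc]
      _ = (b * b⁻¹) * ((b * b⁻¹) * (a * a⁻¹)) := by rw [commRR a (rr_idem b)]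
      _ = (b * b⁻¹) * (a * a⁻¹) := by rw [dupI (rr_idem b)]
  have heq : a * a⁻¹ = b * b⁻¹ := by
    rw [haa, idem_comm (rr_idem a) (rr_idem b), ← hbb]
  rw [ha, heq, miv]

lemma conj_idem {c E : S} (hE : E * E = E) :
    (c * E * c⁻¹) * (c * E * c⁻¹) = c * E * c⁻¹ := by
  calc (c * E * c⁻¹) * (c * E * c⁻¹) = c * (E * (c⁻¹ * (c * (E * c⁻¹)))) := by
        simp only [mul_assoc]
    _ = c * (c⁻¹ * (c * (E * (E * c⁻¹)))) := by rw [swapDD c hE (E * c⁻¹)]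
    _ = c * (E * (E * c⁻¹)) := by rw [sA]
    _ = c * (E * c⁻¹) := by rw [dupI hE]
    _ = c * E * c⁻¹ := by rw [← mul_assoc]

lemma conj_idem' {c E : S} (hE : E * E = E) :
    (c⁻¹ * E * c) * (c⁻¹ * E * c) = c⁻¹ * E * c := by
  have := conj_idem (c := c⁻¹) hE
  rwa [inv_invol] at this

lemma nle_mull {a b : S} (c : S) (h : nle a b) : nle (c * a) (c * b) := by
  obtain ⟨E, hE, hEe⟩ := h
  refine ⟨c * E * c⁻¹, conj_idem hE, ?_⟩
  symm
  calc (c * E * c⁻¹) * (c * b) = c * (E * (c⁻¹ * (c * b))) := by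
        simp only [mul_assoc]
    _ = c * (c⁻¹ * (c * (E * b))) := by rw [swapDD c hE b]
    _ = c * (E * b) := by rw [sA]
    _ = c * a := by rw [← hEe]

lemma nle_mulr {a b : S} (c : S) (h : nle a b) : nle (a * c) (b * c) := by
  obtain ⟨E, hE, hEe⟩ := h
  exact ⟨E, hE, by rw [hEe, mul_assoc]⟩

lemma idem_of_le {x e : S} (he : e * e = e) (h : nle x e) : x * x = x := by
  obtain ⟨E, hE, hEe⟩ := h
  rw [hEe]
  calc (E * e) * (E * e) = E * (e * (E * e)) := by simp only [mul_assoc]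
    _ = E * (E * (e * e)) := by rw [swapI he hE e]
    _ = E * (e * e) := by rw [dupI hE]
    _ = E * e := by rw [he]

lemma ile_of_nle {e f : S} (he : e * e = e) (hf : f * f = f) (h : nle e f) :
    e * f = e := by
  have h1 := nle_rcanon h
  rw [idem_inv he, he] at h1
  rw [idem_comm he hf, ← h1]

lemma nle_of_ile {e f : S} (he : e * e = e) (h : e * f = e) : nle e f :=
  ⟨e, he, h.symm⟩

end S11
namespace S11

variable {S : Type u} [BooleanInverseMeetMonoid S]

/-! ### Compatibility and binary joins -/

lemma compat_idem {e f : S} (he : e * e = e) (hf : f * f = f) : Compat e f := by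
  constructor
  · rw [idem_inv hf]; exact idem_mul he hf
  · rw [idem_inv he]; exact idem_mul he hf

lemma compat_symm {a b : S} (h : Compat a b) : Compat b a := by
  obtain ⟨h1, h2⟩ := h
  have e1 : b * a⁻¹ = (a * b⁻¹)⁻¹ := by rw [mul_inv_rev', inv_invol]
  have e2 : b⁻¹ * a = (a⁻¹ * b)⁻¹ := by rw [mul_inv_rev', inv_invol]
  constructor
  · rw [e1, idem_inv h1]; exact h1
  · rw [e2, idem_inv h2]; exact h2

lemma compat_inv {a b : S} (h : Compat a b) : Compat a⁻¹ b⁻¹ := by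
  obtain ⟨h1, h2⟩ := h
  constructor
  · rw [inv_invol]; exact h2
  · rw [inv_invol]; exact h1

lemma compat_zero_r (a : S) : Compat a 0 := by
  constructor
  · rw [inv_zero', mulz, zmul]
  · rw [mulz, zmul]

lemma compat_zero_l (a : S) : Compat 0 a := compat_symm (compat_zero_r a)

lemma compat_of_orth {a b : S} (h : Orth a b) : Compat a b := by
  obtain ⟨h1, h2⟩ := h
  constructor
  · rw [h1, zmul]
  · rw [h2, zmul]

lemma compat_of_le {a b c : S} (ha : nle a c) (hb : nle b c) : Compat a b := by
  obtain ⟨E, hE, hEe⟩ := ha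
  obtain ⟨F, hF, hFe⟩ := hb
  constructor
  · have : a * b⁻¹ = E * (c * (c⁻¹ * F)) := by
      rw [hEe, hFe, mul_inv_rev', idem_inv hF]; simp only [mul_assoc]
    rw [this, commRR c hF, ← mul_assoc E F (c * c⁻¹)]
    exact idem_mul (idem_mul hE hF) (rr_idem c)
  · have : a⁻¹ * b = c⁻¹ * ((E * F) * c) := by
      rw [hEe, hFe, mul_inv_rev', idem_inv hE]; simp only [mul_assoc]
    rw [this, ← mul_assoc c⁻¹ (E * F) c]
    exact conj_idem' (idem_mul hE hF)

/-! ### bsup -/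

lemma le_sup_l {a b : S} (h : Compat a b) : nle a (bsup a b) :=
  DistributiveInverseMonoid.le_sup_left a b h

lemma le_sup_r {a b : S} (h : Compat a b) : nle b (bsup a b) :=
  DistributiveInverseMonoid.le_sup_right a b h

lemma sup_le' {a b c : S} (h : Compat a b) (h1 : nle a c) (h2 : nle b c) :
    nle (bsup a b) c :=
  DistributiveInverseMonoid.sup_le a b c h h1 h2

lemma mul_sup' {a b : S} (c : S) (h : Compat a b) :
    c * bsup a b = bsup (c * a) (c * b) :=
  DistributiveInverseMonoid.mul_sup a b c h

lemma sup_mul' {a b : S} (c : S) (h : Compat a b) :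
    bsup a b * c = bsup (a * c) (b * c) :=
  DistributiveInverseMonoid.sup_mul a b c h

lemma sup_zero (a : S) : bsup a 0 = a :=
  nle_antisymm (sup_le' (compat_zero_r a) (nle_refl a) (nle_zero a))
    (le_sup_l (compat_zero_r a))

lemma zero_sup (a : S) : bsup 0 a = a :=
  nle_antisymm (sup_le' (compat_zero_l a) (nle_zero a) (nle_refl a))
    (le_sup_r (compat_zero_l a))

lemma sup_comm {a b : S} (h : Compat a b) : bsup a b = bsup b a := by
  have h' := compat_symm h
  exact nle_antisymm (sup_le' h (le_sup_r h') (le_sup_l h'))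
    (sup_le' h' (le_sup_r h) (le_sup_l h))

lemma sup_zero_parts {a b : S} (h : Compat a b) (hz : bsup a b = 0) :
    a = 0 ∧ b = 0 :=
  ⟨nle_zero_eq (hz ▸ le_sup_l h), nle_zero_eq (hz ▸ le_sup_r h)⟩

lemma nle_sup_of_le {a b x : S} (h : Compat a b) (hx : nle x a) :
    nle x (bsup a b) := nle_trans hx (le_sup_l h)

lemma nle_sup_of_le' {a b x : S} (h : Compat a b) (hx : nle x b) :
    nle x (bsup a b) := nle_trans hx (le_sup_r h)

/-- the join of two idempotents is idempotent -/
lemma sup_idem {e f : S} (he : e * e = e) (hf : f * f = f) :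
    (bsup e f) * (bsup e f) = bsup e f := by
  set X := bsup e f with hX
  have hC : Compat e f := compat_idem he hf
  have hXe : X * e = bsup e (f * e) := by
    rw [hX, sup_mul' e hC, he]
  have hXf : X * f = bsup (e * f) f := by
    rw [hX, sup_mul' f hC, hf]
  have hXeX : nle (X * e) X := nle_of_r he rfl
  have hXfX : nle (X * f) X := nle_of_r hf rfl
  have hXX : X * X = bsup (X * e) (X * f) := mul_sup' X hC
  have hle : nle (X * X) X := by
    rw [hXX]; exact sup_le' (compat_of_le hXeX hXfX) hXeX hXfX
  have heXX : nle e (X * X) := by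
    have h1 : nle e (X * e) := by
      rw [hXe]
      exact le_sup_l (compat_idem he (idem_mul hf he))
    rw [hXX]
    exact nle_sup_of_le (compat_of_le hXeX hXfX) h1
  have hfXX : nle f (X * X) := by
    have h1 : nle f (X * f) := by
      rw [hXf]
      exact le_sup_r (compat_idem (idem_mul he hf) hf)
    rw [hXX]
    exact nle_sup_of_le' (compat_of_le hXeX hXfX) h1
  have hge : nle X (X * X) := sup_le' hC heXX hfXX
  exact nle_antisymm hle hge

/-- `(a ∨ b)(a⁻¹ ∨ b⁻¹)(a ∨ b) = a ∨ b` for compatible `a, b`. -/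
lemma sup_sandwich {a b : S} (h : Compat a b) :
    (bsup a b) * (bsup a⁻¹ b⁻¹) * (bsup a b) = bsup a b := by
  have hI := compat_inv h
  set j := bsup a b with hj
  have haj : nle a j := le_sup_l h
  have hbj : nle b j := le_sup_r h
  -- j * (a⁻¹ ∨ b⁻¹) = (aa⁻¹ ∨ ba⁻¹) ∨ (ab⁻¹ ∨ bb⁻¹)
  have step1 : j * bsup a⁻¹ b⁻¹ = bsup (bsup (a * a⁻¹) (b * a⁻¹)) (bsup (a * b⁻¹) (b * b⁻¹)) := by
    rw [mul_sup' j hI, hj, sup_mul' a⁻¹ h, sup_mul' b⁻¹ h]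
  -- each of the four is an idempotent
  have i1 : (a * a⁻¹) * (a * a⁻¹) = a * a⁻¹ := rr_idem a
  have i4 : (b * b⁻¹) * (b * b⁻¹) = b * b⁻¹ := rr_idem b
  have i3 : (a * b⁻¹) * (a * b⁻¹) = a * b⁻¹ := h.1
  have i2 : (b * a⁻¹) * (b * a⁻¹) = b * a⁻¹ := (compat_symm h).1
  have e12 : (bsup (a * a⁻¹) (b * a⁻¹)) * (bsup (a * a⁻¹) (b * a⁻¹)) = _ := sup_idem i1 i2
  have e34 : (bsup (a * b⁻¹) (b * b⁻¹)) * (bsup (a * b⁻¹) (b * b⁻¹)) = _ := sup_idem i3 i4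
  -- expand (j z) * j
  have step2 : j * bsup a⁻¹ b⁻¹ * j =
      bsup (bsup (bsup (a*a⁻¹*a) (a*a⁻¹*b)) (bsup (b*a⁻¹*a) (b*a⁻¹*b)))
           (bsup (bsup (a*b⁻¹*a) (a*b⁻¹*b)) (bsup (b*b⁻¹*a) (b*b⁻¹*b))) := by
    rw [step1, hj]
    rw [sup_mul' _ (compat_idem e12 e34), sup_mul' _ (compat_idem i1 i2),
      sup_mul' _ (compat_idem i3 i4), mul_sup' _ h, mul_sup' _ h, mul_sup' _ h,
      mul_sup' _ h]
  -- every term is ≤ j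
  have t1 : nle (a*a⁻¹*a) j := by rw [miv]; exact haj
  have t2 : nle (a*a⁻¹*b) j := nle_trans ⟨a*a⁻¹, rr_idem a, rfl⟩ hbj
  have t3 : nle (b*a⁻¹*a) j := nle_trans (nle_of_r (dd_idem a) (mul_assoc b a⁻¹ a)) hbj
  have t4 : nle (b*a⁻¹*b) j := nle_trans ⟨b*a⁻¹, i2, rfl⟩ hbj
  have t5 : nle (a*b⁻¹*a) j := nle_trans ⟨a*b⁻¹, i3, rfl⟩ haj
  have t6 : nle (a*b⁻¹*b) j := nle_trans (nle_of_r (dd_idem b) (mul_assoc a b⁻¹ b)) haj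
  have t7 : nle (b*b⁻¹*a) j := nle_trans ⟨b*b⁻¹, rr_idem b, rfl⟩ haj
  have t8 : nle (b*b⁻¹*b) j := by rw [miv]; exact hbj
  have s12 : nle (bsup (a*a⁻¹*a) (a*a⁻¹*b)) j := sup_le' (compat_of_le t1 t2) t1 t2
  have s34 : nle (bsup (b*a⁻¹*a) (b*a⁻¹*b)) j := sup_le' (compat_of_le t3 t4) t3 t4
  have s56 : nle (bsup (a*b⁻¹*a) (a*b⁻¹*b)) j := sup_le' (compat_of_le t5 t6) t5 t6
  have s78 : nle (bsup (b*b⁻¹*a) (b*b⁻¹*b)) j := sup_le' (compat_of_le t7 t8) t7 t8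
  have sL : nle (bsup (bsup (a*a⁻¹*a) (a*a⁻¹*b)) (bsup (b*a⁻¹*a) (b*a⁻¹*b))) j :=
    sup_le' (compat_of_le s12 s34) s12 s34
  have sR : nle (bsup (bsup (a*b⁻¹*a) (a*b⁻¹*b)) (bsup (b*b⁻¹*a) (b*b⁻¹*b))) j :=
    sup_le' (compat_of_le s56 s78) s56 s78
  have hle : nle (j * bsup a⁻¹ b⁻¹ * j) j := by
    rw [step2]; exact sup_le' (compat_of_le sL sR) sL sR
  -- a and b are below the big join
  have hA : nle a (j * bsup a⁻¹ b⁻¹ * j) := by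
    rw [step2]
    refine nle_sup_of_le (compat_of_le sL sR) ?_
    refine nle_sup_of_le (compat_of_le s12 s34) ?_
    have : nle a (bsup (a*a⁻¹*a) (a*a⁻¹*b)) := by
      rw [miv]; exact le_sup_l (compat_of_le haj t2)
    exact this
  have hB : nle b (j * bsup a⁻¹ b⁻¹ * j) := by
    rw [step2]
    refine nle_sup_of_le' (compat_of_le sL sR) ?_
    refine nle_sup_of_le' (compat_of_le s56 s78) ?_
    have : nle b (bsup (b*b⁻¹*a) (b*b⁻¹*b)) := by
      rw [miv]; exact le_sup_r (compat_of_le t7 hbj)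
    exact this
  have hge : nle j (j * bsup a⁻¹ b⁻¹ * j) := sup_le' h hA hB
  exact nle_antisymm hle hge

/-- inverse of a compatible join -/
lemma sup_inv {a b : S} (h : Compat a b) : (bsup a b)⁻¹ = bsup a⁻¹ b⁻¹ := by
  symm
  apply inv_uniq
  · exact sup_sandwich h
  · have := sup_sandwich (compat_inv h)
    rwa [inv_invol, inv_invol] at this

/-- compatibility with a join -/
lemma compat_sup {a b c : S} (hab : Compat a b) (hac : Compat a c) (hbc : Compat b c) :
    Compat a (bsup b c) := by
  constructor
  · rw [sup_inv hbc, mul_sup' a (compat_inv hbc)]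
    exact sup_idem hab.1 hac.1
  · rw [mul_sup' a⁻¹ hbc]
    exact sup_idem hab.2 hac.2

end S11
namespace S11

variable {S : Type u} [BooleanInverseMeetMonoid S]

/-! ### Finite joins of lists -/

def supL (l : List S) : S := l.foldr bsup 0

@[simp] lemma supL_nil : supL ([] : List S) = 0 := rfl
@[simp] lemma supL_cons (x : S) (l : List S) : supL (x :: l) = bsup x (supL l) := rfl

lemma compat_supL : ∀ (l : List S) {x : S}, (∀ y ∈ l, Compat x y) →
    l.Pairwise Compat → Compat x (supL l)
  | [], x, _, _ => by simpa using compat_zero_r x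
  | y :: t, x, h, hp => by
    rw [List.pairwise_cons] at hp
    have hxy : Compat x y := h y List.mem_cons_self
    have hxt : Compat x (supL t) :=
      compat_supL t (fun z hz => h z (List.mem_cons_of_mem y hz)) hp.2
    have hyt : Compat y (supL t) := compat_supL t hp.1 hp.2
    simpa using compat_sup hxy hxt hyt

lemma supL_ub {l : List S} (hp : l.Pairwise Compat) : ∀ x ∈ l, nle x (supL l) := by
  induction l with
  | nil => intro x hx; simp at hx
  | cons y t ih =>
    rw [List.pairwise_cons] at hp
    intro x hx
    rcases List.mem_cons.mp hx with rfl | hx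
    · exact le_sup_l (compat_supL t hp.1 hp.2)
    · exact nle_sup_of_le' (compat_supL t hp.1 hp.2) (ih hp.2 x hx)

lemma supL_least {l : List S} {c : S} (hp : l.Pairwise Compat)
    (h : ∀ x ∈ l, nle x c) : nle (supL l) c := by
  induction l with
  | nil => exact nle_zero c
  | cons y t ih =>
    rw [List.pairwise_cons] at hp
    exact sup_le' (compat_supL t hp.1 hp.2) (h y List.mem_cons_self)
      (ih hp.2 (fun x hx => h x (List.mem_cons_of_mem y hx)))

lemma pairwise_of_ub {l : List S} {c : S} (h : ∀ x ∈ l, nle x c) :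
    l.Pairwise Compat := by
  induction l with
  | nil => exact List.Pairwise.nil
  | cons y t ih =>
    refine List.Pairwise.cons ?_ (ih (fun x hx => h x (List.mem_cons_of_mem y hx)))
    intro z hz
    exact compat_of_le (h y List.mem_cons_self) (h z (List.mem_cons_of_mem y hz))

lemma supL_eq_of_lub {l : List S} {a : S} (hub : ∀ x ∈ l, nle x a)
    (hl : ∀ c : S, (∀ x ∈ l, nle x c) → nle a c) : supL l = a :=
  nle_antisymm (supL_least (pairwise_of_ub hub) hub)
    (hl _ (supL_ub (pairwise_of_ub hub)))

lemma supL_mull (c : S) {l : List S} (hp : l.Pairwise Compat) :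
    c * supL l = supL (l.map (fun x => c * x)) := by
  induction l with
  | nil => simp [mulz]
  | cons y t ih =>
    rw [List.pairwise_cons] at hp
    simp only [supL_cons, List.map_cons]
    rw [mul_sup' c (compat_supL t hp.1 hp.2), ih hp.2]

lemma supL_mulr (c : S) {l : List S} (hp : l.Pairwise Compat) :
    supL l * c = supL (l.map (fun x => x * c)) := by
  induction l with
  | nil => simp [zmul]
  | cons y t ih =>
    rw [List.pairwise_cons] at hp
    simp only [supL_cons, List.map_cons]
    rw [sup_mul' c (compat_supL t hp.1 hp.2), ih hp.2]

/-! ### The goal predicate -/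

def Good (s : S) : Prop :=
  ∃ l : List S, l ≠ [] ∧ (∀ x ∈ l, ∃ g : S, IsUnit g ∧ nle x g) ∧
    (∀ x ∈ l, nle x s) ∧ ∀ c : S, (∀ x ∈ l, nle x c) → nle s c

lemma good_of_unit {s : S} (h : ∃ g : S, IsUnit g ∧ nle s g) : Good s := by
  exact ⟨[s], by simp, by simpa using h, by simpa using nle_refl s,
    fun c hc => hc s (List.mem_singleton_self s)⟩

lemma good_glue {a b s : S} (hC : Compat a b) (hs : s = bsup a b)
    (ha : Good a) (hb : Good b) : Good s := by
  obtain ⟨la, hla, hua, hba, hlba⟩ := ha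
  obtain ⟨lb, hlb, hub, hbb, hlbb⟩ := hb
  refine ⟨la ++ lb, by simp [hla], ?_, ?_, ?_⟩
  · intro x hx
    rcases List.mem_append.mp hx with h | h
    · exact hua x h
    · exact hub x h
  · intro x hx
    rcases List.mem_append.mp hx with h | h
    · exact nle_trans (hba x h) (hs ▸ le_sup_l hC)
    · exact nle_trans (hbb x h) (hs ▸ le_sup_r hC)
  · intro c hc
    have h1 : nle a c := hlba c (fun x hx => hc x (List.mem_append.mpr (Or.inl hx)))
    have h2 : nle b c := hlbb c (fun x hx => hc x (List.mem_append.mpr (Or.inr hx)))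
    rw [hs]
    exact sup_le' hC h1 h2

end S11
namespace S11

variable {S : Type u} [BooleanInverseMeetMonoid S]

/-! ### Pencils from 0-simplicity -/

lemma pencil_aux {f : S} (hf : f * f = f) {e : S} (he : e * e = e) :
    ∀ l : List S, (∀ x ∈ l, (∃ a b : S, x = a * f * b) ∧ nle x e) →
    ∃ ts : List S, ts.map (fun t => t⁻¹ * t) = l ∧
      ∀ t ∈ ts, (t * t⁻¹) * f = t * t⁻¹
  | [], _ => ⟨[], rfl, by simp⟩
  | x :: l, h => by
    obtain ⟨ts, hts, hr⟩ := pencil_aux hf he l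
      (fun y hy => h y (List.mem_cons_of_mem x hy))
    obtain ⟨⟨a, b, hx⟩, hxe⟩ := h x List.mem_cons_self
    have hxi : x * x = x := idem_of_le he hxe
    set t := f * (b * x) with htdef
    have ha1 : a * t = x := by
      calc a * (f * (b * x)) = (a * f * b) * x := by simp only [mul_assoc]
        _ = x * x := by rw [← hx]
        _ = x := hxi
    have htx : t * x = t := by
      calc (f * (b * x)) * x = f * (b * (x * x)) := by simp only [mul_assoc]
        _ = f * (b * x) := by rw [hxi]
    have hd1 : (t⁻¹ * t) * x = t⁻¹ * t := by rw [mul_assoc, htx]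
    have hd2 : x * (t⁻¹ * t) = x := by
      conv_lhs => rw [← ha1]
      calc (a * t) * (t⁻¹ * t) = a * (t * (t⁻¹ * t)) := by simp only [mul_assoc]
        _ = a * t := by rw [sA']
        _ = x := ha1
    have hdt : t⁻¹ * t = x := by
      rw [← hd1, idem_comm (dd_idem t) hxi, hd2]
    have hft : f * t = t := by rw [htdef, ← mul_assoc, hf]
    have hrt : (t * t⁻¹) * f = t * t⁻¹ := by
      have h1 : f * (t * t⁻¹) = t * t⁻¹ := by rw [← mul_assoc, hft]
      rw [idem_comm (rr_idem t) hf, h1]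
    refine ⟨t :: ts, ?_, ?_⟩
    · simp only [List.map_cons, hts, hdt]
    · intro u hu
      rcases List.mem_cons.mp hu with rfl | hu
      · exact hrt
      · exact hr u hu

lemma pencil (h0 : ZeroSimplifying S) {f : S} (hf : f * f = f) (hf0 : f ≠ 0)
    {e : S} (he : e * e = e) :
    ∃ ts : List S, (∀ t ∈ ts, (t * t⁻¹) * f = t * t⁻¹) ∧
      (∀ t ∈ ts, nle (t⁻¹ * t) e) ∧
      supL (ts.map (fun t => t⁻¹ * t)) = e := by
  classical
  set I : Set S := {u | ∃ l : List S,
    (∀ x ∈ l, (∃ a b : S, x = a * f * b) ∧ nle x u) ∧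
    ∀ c : S, (∀ x ∈ l, nle x c) → nle u c} with hI
  have hmem : ∀ u ∈ I, ∃ l : List S,
      (∀ x ∈ l, (∃ a b : S, x = a * f * b) ∧ nle x u) ∧
      ∀ c : S, (∀ x ∈ l, nle x c) → nle u c := fun u hu => hu
  have hzero : (0 : S) ∈ I := ⟨[], by simp, fun c _ => nle_zero c⟩
  have hfI : f ∈ I := by
    refine ⟨[f], ?_, ?_⟩
    · intro x hx
      rw [List.mem_singleton] at hx
      refine ⟨⟨1, 1, ?_⟩, ?_⟩
      · rw [hx, one_mul, mul_one]
      · rw [hx]; exact nle_refl f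
    · intro c hc
      exact hc f (List.mem_singleton_self f)
  -- I is a ∨-ideal
  have hideal : IsVIdeal I := by
    refine ⟨⟨⟨0, hzero⟩, ?_⟩, ?_⟩
    · rintro u ⟨l, h1, h2⟩ s
      have hub : ∀ x ∈ l, nle x u := fun x hx => (h1 x hx).2
      have hpw := pairwise_of_ub hub
      have huL : supL l = u := supL_eq_of_lub hub h2
      constructor
      · -- s * u ∈ I
        refine ⟨l.map (fun x => s * x), ?_, ?_⟩
        · intro y hy
          obtain ⟨x, hx, rfl⟩ := List.mem_map.mp hy
          obtain ⟨⟨a, b, hab⟩, hxu⟩ := h1 x hx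
          refine ⟨⟨s * a, b, ?_⟩, nle_mull s hxu⟩
          rw [hab]; simp only [mul_assoc]
        · intro c hc
          have heq : s * u = supL (l.map (fun x => s * x)) := by
            rw [← huL, supL_mull s hpw]
          rw [heq]
          refine supL_least (pairwise_of_ub (l := l.map _) (c := s * u) ?_) ?_
          · intro y hy
            obtain ⟨x, hx, rfl⟩ := List.mem_map.mp hy
            exact nle_mull s ((h1 x hx).2)
          · intro y hy
            exact hc y hy
      · -- u * s ∈ I
        refine ⟨l.map (fun x => x * s), ?_, ?_⟩
        · intro y hy
          obtain ⟨x, hx, rfl⟩ := List.mem_map.mp hy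
          obtain ⟨⟨a, b, hab⟩, hxu⟩ := h1 x hx
          refine ⟨⟨a, b * s, ?_⟩, nle_mulr s hxu⟩
          rw [hab]; simp only [mul_assoc]
        · intro c hc
          have heq : u * s = supL (l.map (fun x => x * s)) := by
            rw [← huL, supL_mulr s hpw]
          rw [heq]
          refine supL_least (pairwise_of_ub (l := l.map _) (c := u * s) ?_) ?_
          · intro y hy
            obtain ⟨x, hx, rfl⟩ := List.mem_map.mp hy
            exact nle_mulr s ((h1 x hx).2)
          · intro y hy
            exact hc y hy
    · rintro u ⟨lu, hu1, hu2⟩ v ⟨lv, hv1, hv2⟩ hC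
      refine ⟨lu ++ lv, ?_, ?_⟩
      · intro x hx
        rcases List.mem_append.mp hx with h | h
        · exact ⟨(hu1 x h).1, nle_trans (hu1 x h).2 (le_sup_l hC)⟩
        · exact ⟨(hv1 x h).1, nle_trans (hv1 x h).2 (le_sup_r hC)⟩
      · intro c hc
        have h1 : nle u c := hu2 c (fun x hx => hc x (List.mem_append.mpr (Or.inl hx)))
        have h2 : nle v c := hv2 c (fun x hx => hc x (List.mem_append.mpr (Or.inr hx)))
        exact sup_le' hC h1 h2
  rcases h0 I hideal with hcase | hcase
  · exfalso
    apply hf0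
    have : f ∈ ({0} : Set S) := hcase ▸ hfI
    simpa using this
  · have heI : e ∈ I := by rw [hcase]; trivial
    obtain ⟨l, h1, h2⟩ := hmem e heI
    obtain ⟨ts, hts, hr⟩ := pencil_aux hf he l h1
    refine ⟨ts, hr, ?_, ?_⟩
    · intro t ht
      have : t⁻¹ * t ∈ l := by
        rw [← hts]
        exact List.mem_map_of_mem ht
      exact (h1 _ this).2
    · rw [hts]
      exact supL_eq_of_lub (fun x hx => (h1 x hx).2) h2

end S11
namespace S11

variable {S : Type u} [BooleanInverseMeetMonoid S]

/-! ### Units from displaced elements -/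

lemma compl_idem' {e : S} (he : e * e = e) : bcompl e * bcompl e = bcompl e :=
  BooleanInverseMonoid.compl_idem e he

lemma mul_compl' {e : S} (he : e * e = e) : e * bcompl e = 0 :=
  BooleanInverseMonoid.mul_compl e he

lemma sup_compl' {e : S} (he : e * e = e) : bsup e (bcompl e) = 1 :=
  BooleanInverseMonoid.sup_compl e he

/-- If the domain and range of `t` are orthogonal then `t` extends to a unit:
`g * d(t) = t` for some unit `g`. -/
lemma swap_unit {t : S} (h : (t⁻¹ * t) * (t * t⁻¹) = 0) :
    ∃ g : S, IsUnit g ∧ g * (t⁻¹ * t) = t := by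
  have hD := dd_idem t
  have hR := rr_idem t
  have hRD : (t * t⁻¹) * (t⁻¹ * t) = 0 := by
    rw [idem_comm hR hD]; exact h
  -- t * t = 0 and t⁻¹ * t⁻¹ = 0
  have hDt : (t⁻¹ * t) * t = 0 := by
    have h1 : (t⁻¹ * t) * (t * t⁻¹ * t) = (t⁻¹ * t) * t := by rw [miv]
    rw [← h1]
    calc (t⁻¹ * t) * (t * t⁻¹ * t) = ((t⁻¹ * t) * (t * t⁻¹)) * t := by
          simp only [mul_assoc]
      _ = 0 := by rw [h, zmul]
  have htt : t * t = 0 := by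
    have h2 : (t * (t⁻¹ * t)) * t = t * t := by rw [sA']
    rw [← h2, mul_assoc, hDt, mulz]
  have hti : t⁻¹ * t⁻¹ = 0 := by
    have : (t * t)⁻¹ = t⁻¹ * t⁻¹ := mul_inv_rev' t t
    rw [htt, inv_zero'] at this
    exact this.symm
  set D := t⁻¹ * t with hDdef
  set R := t * t⁻¹ with hRdef
  have hE : (bsup D R) * (bsup D R) = bsup D R := sup_idem hD hR
  set w := bcompl (bsup D R) with hwdef
  have hw : w * w = w := compl_idem' hE
  have hEw : (bsup D R) * w = 0 := mul_compl' hE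
  have hDE : D * bsup D R = D := ile_of_nle hD hE (le_sup_l (compat_idem hD hR))
  have hRE : R * bsup D R = R := ile_of_nle hR hE (le_sup_r (compat_idem hD hR))
  have hDw : D * w = 0 := by rw [← hDE, mul_assoc, hEw, mulz]
  have hRw : R * w = 0 := by rw [← hRE, mul_assoc, hEw, mulz]
  have hwD : w * D = 0 := by rw [← idem_comm hD hw]; exact hDw
  have hwR : w * R = 0 := by rw [← idem_comm hR hw]; exact hRw
  have htw : t * w = 0 := by
    have h1 : (t * (t⁻¹ * t)) * w = t * w := by rw [sA']
    rw [← h1, mul_assoc, hDw, mulz]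
  have hwt : w * t = 0 := by
    have h1 : w * ((t * t⁻¹) * t) = w * t := by rw [miv]
    rw [← h1, ← mul_assoc, hwR, zmul]
  have htiw : t⁻¹ * w = 0 := by
    have h1 : (t⁻¹ * (t * t⁻¹)) * w = t⁻¹ * w := by rw [sB']
    rw [← h1, mul_assoc, hRw, mulz]
  have hwti : w * t⁻¹ = 0 := by
    have h1 : w * ((t⁻¹ * t) * t⁻¹) = w * t⁻¹ := by rw [mul_assoc t⁻¹ t t⁻¹, sB']
    rw [← h1, ← mul_assoc, hwD, zmul]
  have c1 : Compat t t⁻¹ := compat_of_orth ⟨by rw [inv_invol]; exact htt, hti⟩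
  set p := bsup t t⁻¹ with hpdef
  have hpw : p * w = 0 := by
    rw [hpdef, sup_mul' w c1, htw, htiw, sup_zero]
  have hwp : w * p = 0 := by
    rw [hpdef, mul_sup' w c1, hwt, hwti, sup_zero]
  have hpinv : p⁻¹ = p := by
    rw [hpdef, sup_inv c1, inv_invol, sup_comm (compat_symm c1)]
  have c2 : Compat p w := by
    refine compat_of_orth ⟨?_, ?_⟩
    · rw [idem_inv hw]; exact hpw
    · rw [hpinv]; exact hpw
  set g := bsup p w with hgdef
  -- g * D = t
  have hpD : p * D = t := by
    rw [hpdef, sup_mul' D c1]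
    have h1 : t * D = t := sA' t
    have h2 : t⁻¹ * D = 0 := by rw [hDdef, ← mul_assoc, hti, zmul]
    rw [h1, h2, sup_zero]
  have hgD : g * D = t := by
    rw [hgdef, sup_mul' D c2, hpD, hwD, sup_zero]
  -- g * g = 1
  have hpt : p * t = D := by
    rw [hpdef, sup_mul' t c1, htt, zero_sup]
  have hpti : p * t⁻¹ = R := by
    rw [hpdef, sup_mul' t⁻¹ c1, hti, sup_zero]
  have hpp : p * p = bsup D R := by
    rw [hpdef, mul_sup' p c1, hpt, hpti]
  have hgp : g * p = bsup D R := by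
    rw [hgdef, sup_mul' p c2, hpp, hwp, sup_zero]
  have hgw : g * w = w := by
    rw [hgdef, sup_mul' w c2, hpw, hw, zero_sup]
  have hgg : g * g = 1 := by
    rw [hgdef, mul_sup' (bsup p w) c2, ← hgdef, hgp, hgw, hwdef]
    exact sup_compl' hE
  have hginv : g⁻¹ = g := by
    rw [hgdef, sup_inv c2, hpinv, idem_inv hw]
  exact ⟨g, ⟨⟨g, g, hgg, hgg⟩, rfl⟩, hgD⟩

lemma sandDK {s k : S} (hkd : k * (s⁻¹ * s) = k) (X : S) :
    k * (s⁻¹ * (s * X)) = k * X := by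
  calc k * (s⁻¹ * (s * X)) = (k * (s⁻¹ * s)) * X := by simp only [mul_assoc]
    _ = k * X := by rw [hkd]

lemma conj_mul {s k k' : S} (hkd : k * (s⁻¹ * s) = k) :
    (s * k * s⁻¹) * (s * k' * s⁻¹) = s * (k * k') * s⁻¹ := by
  calc (s * k * s⁻¹) * (s * k' * s⁻¹)
      = s * (k * (s⁻¹ * (s * (k' * s⁻¹)))) := by simp only [mul_assoc]
    _ = s * (k * (k' * s⁻¹)) := by rw [sandDK hkd]
    _ = s * (k * k') * s⁻¹ := by simp only [mul_assoc]

/-- A restriction `s * k` of `s` whose domain copy `ψ` lands clear of both `k`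
and `s k s⁻¹` lies beneath a unit. -/
lemma piece_unit {s k ψ : S} (hk : k * k = k) (hkd : k * (s⁻¹ * s) = k)
    (hdψ : ψ⁻¹ * ψ = k) (hG1 : (ψ * ψ⁻¹) * k = 0)
    (hG2 : (ψ * ψ⁻¹) * (s * k * s⁻¹) = 0) :
    ∃ g : S, IsUnit g ∧ nle (s * k) g := by
  have hG := rr_idem ψ
  -- v : swap unit for ψ
  have hvh : (ψ⁻¹ * ψ) * (ψ * ψ⁻¹) = 0 := by
    rw [hdψ, idem_comm hk hG]; exact hG1
  obtain ⟨v, hvU, hvD⟩ := swap_unit hvh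
  have hvk : v * k = ψ := by rw [← hdψ]; exact hvD
  -- χ := s k ψ⁻¹
  set χ := s * k * ψ⁻¹ with hχdef
  have hψk : ψ * k = ψ := by rw [← hdψ, sA']
  have hχi : χ⁻¹ = ψ * (k * s⁻¹) := by
    rw [hχdef, mul_inv_rev' (s * k) ψ⁻¹, inv_invol, mul_inv_rev' s k, idem_inv hk]
  have hdχ : χ⁻¹ * χ = ψ * ψ⁻¹ := by
    calc χ⁻¹ * χ = ψ * (k * (s⁻¹ * (s * (k * ψ⁻¹)))) := by
          rw [hχi, hχdef]; simp only [mul_assoc]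
      _ = ψ * (k * (k * ψ⁻¹)) := by rw [sandDK hkd]
      _ = ψ * (k * ψ⁻¹) := by rw [dupI hk]
      _ = ψ * ψ⁻¹ := by rw [← mul_assoc, hψk]
  have hchainψ : ∀ X : S, ψ⁻¹ * (ψ * X) = k * X := by
    intro X; rw [← mul_assoc, hdψ]
  have hrχ : χ * χ⁻¹ = s * k * s⁻¹ := by
    calc χ * χ⁻¹ = s * (k * (ψ⁻¹ * (ψ * (k * s⁻¹)))) := by
          rw [hχi, hχdef]; simp only [mul_assoc]
      _ = s * (k * (k * (k * s⁻¹))) := by rw [hchainψ]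
      _ = s * (k * s⁻¹) := by rw [dupI hk, dupI hk]
      _ = s * k * s⁻¹ := by rw [← mul_assoc]
  have huh : (χ⁻¹ * χ) * (χ * χ⁻¹) = 0 := by
    rw [hdχ, hrχ]; exact hG2
  obtain ⟨u, huU, huD⟩ := swap_unit huh
  have huG : u * (ψ * ψ⁻¹) = χ := by rw [← hdχ]; exact huD
  have hGψ : (ψ * ψ⁻¹) * ψ = ψ := miv ψ
  have hfin : (u * v) * k = s * k := by
    rw [mul_assoc, hvk]
    calc u * ψ = u * ((ψ * ψ⁻¹) * ψ) := by rw [hGψ]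
      _ = χ * ψ := by rw [← mul_assoc, huG]
      _ = s * (k * (ψ⁻¹ * ψ)) := by rw [hχdef]; simp only [mul_assoc]
      _ = s * (k * k) := by rw [hdψ]
      _ = s * k := by rw [hk]
  exact ⟨u * v, huU.mul hvU, nle_of_r hk hfin.symm⟩

end S11
namespace S11

variable {S : Type u} [BooleanInverseMeetMonoid S]

lemma le_zero_absorb {F X x : S} (hFX : F * X = 0) (hx : X * x = x) : F * x = 0 := by
  rw [← hx, ← mul_assoc, hFX, zmul]

/-- If `K ≤ d(s)` is an idempotent and `F` is a nonzero idempotent disjoint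
from both `K` and `s K s⁻¹`, then `s * K` is a join of pieces beneath units. -/
lemma coverGood (h0 : ZeroSimplifying S) {s K F : S} (hK : K * K = K)
    (hKd : K * (s⁻¹ * s) = K) (hF : F * F = F) (hF0 : F ≠ 0)
    (hsepK : F * K = 0) (hsepR : F * (s * K * s⁻¹) = 0) : Good (s * K) := by
  obtain ⟨ts, hrF, hde, hsup⟩ := pencil h0 hF hF0 hK
  have hkK : ∀ t ∈ ts, (t⁻¹ * t) * K = t⁻¹ * t := fun t ht =>
    ile_of_nle (dd_idem t) hK (hde t ht)
  have hKk : ∀ t ∈ ts, K * (t⁻¹ * t) = t⁻¹ * t := fun t ht => by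
    rw [← idem_comm (dd_idem t) hK]; exact hkK t ht
  have hkd : ∀ t ∈ ts, (t⁻¹ * t) * (s⁻¹ * s) = t⁻¹ * t := by
    intro t ht
    calc (t⁻¹*t) * (s⁻¹*s) = ((t⁻¹*t) * K) * (s⁻¹*s) := by rw [hkK t ht]
      _ = (t⁻¹*t) * (K * (s⁻¹*s)) := by rw [mul_assoc]
      _ = (t⁻¹*t) * K := by rw [hKd]
      _ = t⁻¹*t := hkK t ht
  have hbound : ∀ x ∈ ts.map (fun t => s * (t⁻¹ * t)), nle x (s * K) := by
    intro x hx
    obtain ⟨t, ht, rfl⟩ := List.mem_map.mp hx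
    have heq : (s * K) * (t⁻¹ * t) = s * (t⁻¹ * t) := by
      rw [mul_assoc, hKk t ht]
    exact nle_of_r (dd_idem t) heq.symm
  have hunit : ∀ x ∈ ts.map (fun t => s * (t⁻¹ * t)),
      ∃ g : S, IsUnit g ∧ nle x g := by
    intro x hx
    obtain ⟨t, ht, rfl⟩ := List.mem_map.mp hx
    have hFk : F * (t⁻¹ * t) = 0 := by
      calc F * (t⁻¹*t) = F * (K * (t⁻¹*t)) := by rw [hKk t ht]
        _ = (F * K) * (t⁻¹*t) := by rw [← mul_assoc]
        _ = 0 := by rw [hsepK, zmul]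
    have hG1 : (t * t⁻¹) * (t⁻¹ * t) = 0 := by
      calc (t*t⁻¹) * (t⁻¹*t) = ((t*t⁻¹) * F) * (t⁻¹*t) := by rw [hrF t ht]
        _ = (t*t⁻¹) * (F * (t⁻¹*t)) := by rw [mul_assoc]
        _ = 0 := by rw [hFk, mulz]
    have hconj : (s * K * s⁻¹) * (s * (t⁻¹*t) * s⁻¹) = s * (t⁻¹*t) * s⁻¹ := by
      rw [conj_mul hKd, hKk t ht]
    have hFc : F * (s * (t⁻¹*t) * s⁻¹) = 0 := by
      rw [← hconj, ← mul_assoc F (s * K * s⁻¹) _, hsepR, zmul]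
    have hG2 : (t * t⁻¹) * (s * (t⁻¹*t) * s⁻¹) = 0 := by
      calc (t*t⁻¹) * (s * (t⁻¹*t) * s⁻¹) = ((t*t⁻¹) * F) * (s * (t⁻¹*t) * s⁻¹) := by
            rw [hrF t ht]
        _ = (t*t⁻¹) * (F * (s * (t⁻¹*t) * s⁻¹)) := by rw [mul_assoc]
        _ = 0 := by rw [hFc, mulz]
    exact piece_unit (dd_idem t) (hkd t ht) rfl hG1 hG2
  have hpw_dd : (ts.map (fun t => t⁻¹ * t)).Pairwise Compat := by
    refine pairwise_of_ub (c := K) ?_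
    intro x hx
    obtain ⟨t, ht, rfl⟩ := List.mem_map.mp hx
    exact hde t ht
  have heq : s * K = supL (ts.map (fun t => s * (t⁻¹ * t))) := by
    rw [← hsup, supL_mull s hpw_dd, List.map_map]
    rfl
  refine ⟨(ts.map (fun t => s * (t⁻¹ * t))) ++ [0], by simp, ?_, ?_, ?_⟩
  · intro x hx
    rcases List.mem_append.mp hx with h | h
    · exact hunit x h
    · rw [List.mem_singleton] at h
      exact ⟨1, isUnit_one, h ▸ nle_zero 1⟩
  · intro x hx
    rcases List.mem_append.mp hx with h | h
    · exact hbound x h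
    · rw [List.mem_singleton] at h
      exact h ▸ nle_zero (s * K)
  · intro c hc
    rw [heq]
    refine supL_least (pairwise_of_ub hbound) ?_
    intro x hx
    exact hc x (List.mem_append.mpr (Or.inl hx))

end S11
namespace S11

variable {S : Type u} [BooleanInverseMeetMonoid S]

/-- Any element whose domain and range both have nonzero complements is a
finite join of elements beneath units. -/
lemma goodB (h0 : ZeroSimplifying S) {t : S}
    (hα0 : bcompl (t⁻¹ * t) ≠ 0) : Good t := by
  have hd : (t⁻¹ * t) * (t⁻¹ * t) = t⁻¹ * t := dd_idem t
  have hr : (t * t⁻¹) * (t * t⁻¹) = t * t⁻¹ := rr_idem t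
  have hαi : bcompl (t⁻¹ * t) * bcompl (t⁻¹ * t) = bcompl (t⁻¹ * t) := compl_idem' hd
  have hβi : bcompl (t * t⁻¹) * bcompl (t * t⁻¹) = bcompl (t * t⁻¹) := compl_idem' hr
  have hdα : (t⁻¹ * t) * bcompl (t⁻¹ * t) = 0 := mul_compl' hd
  have hrβ : (t * t⁻¹) * bcompl (t * t⁻¹) = 0 := mul_compl' hr
  have hαd : bcompl (t⁻¹ * t) * (t⁻¹ * t) = 0 := by
    rw [← idem_comm hd hαi]; exact hdα
  have hβr : bcompl (t * t⁻¹) * (t * t⁻¹) = 0 := by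
    rw [← idem_comm hr hβi]; exact hrβ
  have htd : t * (t⁻¹ * t) = t := sA' t
  have htdr : t * (t⁻¹ * t) * t⁻¹ = t * t⁻¹ := by rw [htd]
  by_cases hdr : (t⁻¹ * t) * (t * t⁻¹) = 0
  · -- displaced element : single unit
    obtain ⟨g, hgU, hgD⟩ := swap_unit hdr
    exact good_of_unit ⟨g, hgU, nle_of_r hd hgD.symm⟩
  by_cases hαβ : bcompl (t⁻¹ * t) * bcompl (t * t⁻¹) = 0
  · -- the complements are disjoint, so `α ≤ r`; split the domain at `q`
    have hαr : bcompl (t⁻¹ * t) * (t * t⁻¹) = bcompl (t⁻¹ * t) := by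
      have h1 : bcompl (t⁻¹ * t) * bsup (t * t⁻¹) (bcompl (t * t⁻¹)) = bcompl (t⁻¹ * t) := by
        rw [sup_compl' hr, mul_one]
      rw [mul_sup' _ (compat_idem hr hβi), hαβ, sup_zero] at h1
      exact h1
    -- q := t⁻¹ α t
    have hqi : (t⁻¹ * bcompl (t⁻¹ * t) * t) * (t⁻¹ * bcompl (t⁻¹ * t) * t)
        = t⁻¹ * bcompl (t⁻¹ * t) * t := conj_idem' hαi
    have hqd : (t⁻¹ * bcompl (t⁻¹ * t) * t) * (t⁻¹ * t) = t⁻¹ * bcompl (t⁻¹ * t) * t := by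
      calc (t⁻¹ * bcompl (t⁻¹ * t) * t) * (t⁻¹ * t)
          = t⁻¹ * (bcompl (t⁻¹ * t) * (t * (t⁻¹ * t))) := by simp only [mul_assoc]
        _ = t⁻¹ * (bcompl (t⁻¹ * t) * t) := by rw [sA']
        _ = t⁻¹ * bcompl (t⁻¹ * t) * t := by rw [← mul_assoc]
    have hqconj : t * (t⁻¹ * bcompl (t⁻¹ * t) * t) * t⁻¹ = bcompl (t⁻¹ * t) := by
      calc t * (t⁻¹ * bcompl (t⁻¹ * t) * t) * t⁻¹
          = t * (t⁻¹ * (bcompl (t⁻¹ * t) * (t * t⁻¹))) := by simp only [mul_assoc]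
        _ = t * (t⁻¹ * bcompl (t⁻¹ * t)) := by rw [hαr]
        _ = (t * t⁻¹) * bcompl (t⁻¹ * t) := by rw [← mul_assoc]
        _ = bcompl (t⁻¹ * t) * (t * t⁻¹) := idem_comm hr hαi
        _ = bcompl (t⁻¹ * t) := hαr
    have hqci : bcompl (t⁻¹ * bcompl (t⁻¹ * t) * t) * bcompl (t⁻¹ * bcompl (t⁻¹ * t) * t)
        = bcompl (t⁻¹ * bcompl (t⁻¹ * t) * t) := compl_idem' hqi
    have hqbar_i : ((t⁻¹ * t) * bcompl (t⁻¹ * bcompl (t⁻¹ * t) * t)) *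
        ((t⁻¹ * t) * bcompl (t⁻¹ * bcompl (t⁻¹ * t) * t))
        = (t⁻¹ * t) * bcompl (t⁻¹ * bcompl (t⁻¹ * t) * t) := idem_mul hd hqci
    have hdq : (t⁻¹ * t) * (t⁻¹ * bcompl (t⁻¹ * t) * t) = t⁻¹ * bcompl (t⁻¹ * t) * t := by
      rw [idem_comm hd hqi]; exact hqd
    have hqqc : (t⁻¹ * bcompl (t⁻¹ * t) * t) *
        ((t⁻¹ * t) * bcompl (t⁻¹ * bcompl (t⁻¹ * t) * t)) = 0 := by
      rw [← mul_assoc, hqd, mul_compl' hqi]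
    -- bsup q qbar = d
    have hsupq : bsup (t⁻¹ * bcompl (t⁻¹ * t) * t)
        ((t⁻¹ * t) * bcompl (t⁻¹ * bcompl (t⁻¹ * t) * t)) = t⁻¹ * t := by
      have h1 : (t⁻¹ * t) * bsup (t⁻¹ * bcompl (t⁻¹ * t) * t)
          (bcompl (t⁻¹ * bcompl (t⁻¹ * t) * t)) = t⁻¹ * t := by
        rw [sup_compl' hqi, mul_one]
      rw [mul_sup' _ (compat_idem hqi hqci), hdq] at h1
      exact h1
    -- first cover piece : K = q, F = bcompl (q ∨ α)
    have hXi : bsup (t⁻¹ * bcompl (t⁻¹ * t) * t) (bcompl (t⁻¹ * t)) *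
        bsup (t⁻¹ * bcompl (t⁻¹ * t) * t) (bcompl (t⁻¹ * t))
        = bsup (t⁻¹ * bcompl (t⁻¹ * t) * t) (bcompl (t⁻¹ * t)) := sup_idem hqi hαi
    have hqX : (t⁻¹ * bcompl (t⁻¹ * t) * t) *
        bsup (t⁻¹ * bcompl (t⁻¹ * t) * t) (bcompl (t⁻¹ * t))
        = t⁻¹ * bcompl (t⁻¹ * t) * t :=
      ile_of_nle hqi hXi (le_sup_l (compat_idem hqi hαi))
    have hαX : bcompl (t⁻¹ * t) * bsup (t⁻¹ * bcompl (t⁻¹ * t) * t) (bcompl (t⁻¹ * t))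
        = bcompl (t⁻¹ * t) :=
      ile_of_nle hαi hXi (le_sup_r (compat_idem hqi hαi))
    have hFX : bcompl (bsup (t⁻¹ * bcompl (t⁻¹ * t) * t) (bcompl (t⁻¹ * t))) *
        bsup (t⁻¹ * bcompl (t⁻¹ * t) * t) (bcompl (t⁻¹ * t)) = 0 := by
      rw [← idem_comm hXi (compl_idem' hXi)]
      exact mul_compl' hXi
    have hF0 : bcompl (bsup (t⁻¹ * bcompl (t⁻¹ * t) * t) (bcompl (t⁻¹ * t))) ≠ 0 := by
      intro h
      have h1 := sup_compl' hXi
      rw [h, sup_zero] at h1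
      -- now q ∨ α = 1, so d = q, so α = r, contradicting d*r ≠ 0
      have h2 : (t⁻¹ * t) * bsup (t⁻¹ * bcompl (t⁻¹ * t) * t) (bcompl (t⁻¹ * t))
          = t⁻¹ * t := by rw [h1, mul_one]
      rw [mul_sup' _ (compat_idem hqi hαi), hdq, hdα, sup_zero] at h2
      -- h2 : q = d
      have h3 := hqconj
      rw [h2, htdr] at h3
      -- h3 : r = α
      apply hdr
      rw [h3]
      exact hdα
    have hgood1 : Good (t * (t⁻¹ * bcompl (t⁻¹ * t) * t)) := by
      refine coverGood h0 hqi hqd (compl_idem' hXi) hF0 ?_ ?_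
      · refine le_zero_absorb hFX ?_
        rw [idem_comm hXi hqi]
        exact hqX
      · rw [hqconj]
        refine le_zero_absorb hFX ?_
        rw [idem_comm hXi hαi]
        exact hαX
    -- second cover piece : K = qbar, F = α
    have hqbar_d : ((t⁻¹ * t) * bcompl (t⁻¹ * bcompl (t⁻¹ * t) * t)) * (t⁻¹ * t)
        = (t⁻¹ * t) * bcompl (t⁻¹ * bcompl (t⁻¹ * t) * t) := by
      rw [mul_assoc, idem_comm hqci hd, ← mul_assoc, hd]
    have hsep1 : bcompl (t⁻¹ * t) *
        ((t⁻¹ * t) * bcompl (t⁻¹ * bcompl (t⁻¹ * t) * t)) = 0 := by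
      rw [← mul_assoc, hαd, zmul]
    have hsep2 : bcompl (t⁻¹ * t) *
        (t * ((t⁻¹ * t) * bcompl (t⁻¹ * bcompl (t⁻¹ * t) * t)) * t⁻¹) = 0 := by
      nth_rewrite 1 [← hqconj]
      rw [conj_mul hqd, hqqc, mulz, zmul]
    have hgood2 : Good (t * ((t⁻¹ * t) * bcompl (t⁻¹ * bcompl (t⁻¹ * t) * t))) :=
      coverGood h0 hqbar_i hqbar_d hαi hα0 hsep1 hsep2
    -- glue
    have horth : Orth (t * (t⁻¹ * bcompl (t⁻¹ * t) * t))
        (t * ((t⁻¹ * t) * bcompl (t⁻¹ * bcompl (t⁻¹ * t) * t))) := by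
      constructor
      · rw [mul_inv_rev', idem_inv hqbar_i]
        calc (t * (t⁻¹ * bcompl (t⁻¹ * t) * t)) *
            ((t⁻¹ * t) * bcompl (t⁻¹ * bcompl (t⁻¹ * t) * t) * t⁻¹)
            = t * ((t⁻¹ * bcompl (t⁻¹ * t) * t) *
              ((t⁻¹ * t) * bcompl (t⁻¹ * bcompl (t⁻¹ * t) * t)) * t⁻¹) := by
              simp only [mul_assoc]
          _ = 0 := by rw [hqqc, zmul, mulz]
      · rw [mul_inv_rev', idem_inv hqi]
        calc ((t⁻¹ * bcompl (t⁻¹ * t) * t) * t⁻¹) *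
            (t * ((t⁻¹ * t) * bcompl (t⁻¹ * bcompl (t⁻¹ * t) * t)))
            = (t⁻¹ * bcompl (t⁻¹ * t) * t) * ((t⁻¹ * (t * ((t⁻¹ * t) *
              bcompl (t⁻¹ * bcompl (t⁻¹ * t) * t)))) ) := by simp only [mul_assoc]
          _ = (t⁻¹ * bcompl (t⁻¹ * t) * t) * ((t⁻¹ * t) * ((t⁻¹ * t) *
              bcompl (t⁻¹ * bcompl (t⁻¹ * t) * t))) := by rw [← mul_assoc t⁻¹ t _]
          _ = (t⁻¹ * bcompl (t⁻¹ * t) * t) * ((t⁻¹ * t) *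
              bcompl (t⁻¹ * bcompl (t⁻¹ * t) * t)) := by rw [dupI hd]
          _ = 0 := hqqc
    have hglue : t = bsup (t * (t⁻¹ * bcompl (t⁻¹ * t) * t))
        (t * ((t⁻¹ * t) * bcompl (t⁻¹ * bcompl (t⁻¹ * t) * t))) := by
      rw [← mul_sup' t (compat_idem hqi hqbar_i), hsupq, htd]
    exact good_glue (compat_of_orth horth) hglue hgood1 hgood2
  · -- α ∧ β ≠ 0 : one cover over the whole domain
    have hsep1 : (bcompl (t⁻¹ * t) * bcompl (t * t⁻¹)) * (t⁻¹ * t) = 0 := by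
      rw [mul_assoc, idem_comm hβi hd, ← mul_assoc, hαd, zmul]
    have hsep2 : (bcompl (t⁻¹ * t) * bcompl (t * t⁻¹)) * (t * (t⁻¹ * t) * t⁻¹) = 0 := by
      rw [htdr, mul_assoc, hβr, mulz]
    have hgood : Good (t * (t⁻¹ * t)) :=
      coverGood h0 hd hd (idem_mul hαi hβi) hαβ hsep1 hsep2
    rwa [htd] at hgood

end S11

/-- Every 0-simplifying Tarski monoid is piecewise
factorizable. -/
theorem statement11 (S : Type u) [BooleanInverseMeetMonoid S] [Countable S]
    (hat : IdemAtomless S) (h0 : ZeroSimplifying S) :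
    PiecewiseFactorizable S := by
  intro s
  show S11.Good s
  by_cases h1 : (s⁻¹ * s) * (s * s⁻¹) = 0
  · -- displaced (or zero) element: a single unit suffices
    obtain ⟨g, hgU, hgD⟩ := S11.swap_unit h1
    exact S11.good_of_unit ⟨g, hgU, S11.nle_of_r (S11.dd_idem s) hgD.symm⟩
  · by_cases hα : bcompl (s⁻¹ * s) = 0
    · -- the domain is all of 1 : split the identity using atomlessness
      have h10 : (1 : S) ≠ 0 := by
        intro h
        apply h1
        calc (s⁻¹ * s) * (s * s⁻¹) = ((s⁻¹ * s) * (s * s⁻¹)) * 1 := (mul_one _).symm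
          _ = 0 := by rw [h, S11.mulz]
      have hd1 : s⁻¹ * s = 1 := by
        have h2 := S11.sup_compl' (S11.dd_idem s)
        rw [hα, S11.sup_zero] at h2
        exact h2
      obtain ⟨k, hki, hk0, -, hk1⟩ := hat 1 (one_mul 1) h10
      have hkci : bcompl k * bcompl k = bcompl k := S11.compl_idem' hki
      have hkc0 : bcompl k ≠ 0 := by
        intro h
        apply hk1
        have h2 := S11.sup_compl' hki
        rw [h, S11.sup_zero] at h2
        exact h2
      have hds : ∀ m : S, m * m = m → (s * m)⁻¹ * (s * m) = m := by
        intro m hm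
        rw [S11.mul_inv_rev', S11.idem_inv hm]
        calc (m * s⁻¹) * (s * m) = m * ((s⁻¹ * s) * m) := by simp only [mul_assoc]
          _ = m * (1 * m) := by rw [hd1]
          _ = m := by rw [one_mul, hm]
      have hgood1 : S11.Good (s * k) := by
        apply S11.goodB h0
        rw [hds k hki]
        exact hkc0
      have hgood2 : S11.Good (s * bcompl k) := by
        apply S11.goodB h0
        rw [hds _ hkci]
        intro h
        apply hk0
        have h2 := S11.sup_compl' hkci
        rw [h, S11.sup_zero] at h2
        have h3 := S11.mul_compl' hki
        rw [h2, mul_one] at h3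
        exact h3
      have horth : Orth (s * k) (s * bcompl k) := by
        constructor
        · rw [S11.mul_inv_rev', S11.idem_inv hkci]
          calc (s * k) * (bcompl k * s⁻¹) = s * ((k * bcompl k) * s⁻¹) := by
                simp only [mul_assoc]
            _ = 0 := by rw [S11.mul_compl' hki, S11.zmul, S11.mulz]
        · rw [S11.mul_inv_rev', S11.idem_inv hki]
          calc (k * s⁻¹) * (s * bcompl k) = k * ((s⁻¹ * s) * bcompl k) := by
                simp only [mul_assoc]
            _ = k * (1 * bcompl k) := by rw [hd1]
            _ = 0 := by rw [one_mul, S11.mul_compl' hki]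
      have hglue : s = bsup (s * k) (s * bcompl k) := by
        rw [← S11.mul_sup' s (S11.compat_idem hki hkci), S11.sup_compl' hki, mul_one]
      exact S11.good_glue (S11.compat_of_orth horth) hglue hgood1 hgood2
    · exact S11.goodB h0 hα
end

section
/- Let S be a Boolean inverse ∧-monoid with group of units G, and let A be an ultrafilter in S. If X = A ∩ G is non-empty then X X⁻¹ X = X, i.e. X is a coset of a subgroup of G. -/
universe u

section CosetAux

variable {S : Type u} [InverseMonoidWithZero S]

private lemma aia (a : S) : a * a⁻¹ * a = a := InverseMonoidWithZero.mul_inv_mul a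
private lemma iai (a : S) : a⁻¹ * a * a⁻¹ = a⁻¹ := InverseMonoidWithZero.inv_mul_inv a
private lemma inv_uniq (a b : S) (h1 : a * b * a = a) (h2 : b * a * b = b) : b = a⁻¹ :=
  InverseMonoidWithZero.inv_unique a b h1 h2

private lemma invinv (a : S) : a⁻¹⁻¹ = a := (inv_uniq a⁻¹ a (iai a) (aia a)).symm

private lemma idem_invS {e : S} (he : e * e = e) : e⁻¹ = e :=
  (inv_uniq e e (by rw [he, he]) (by rw [he, he])).symm

private lemma idem_dd (a : S) : (a * a⁻¹) * (a * a⁻¹) = a * a⁻¹ := by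
  rw [← mul_assoc, aia]

private lemma idem_rr (a : S) : (a⁻¹ * a) * (a⁻¹ * a) = a⁻¹ * a := by
  rw [← mul_assoc, iai]

private lemma idem_mul_idem {e f : S} (he : e * e = e) (hf : f * f = f) :
    (e * f) * (e * f) = e * f := by
  have h1 : (e*f) * (f*(e*f)⁻¹*e) * (e*f) = e*f := by
    calc (e*f) * (f*(e*f)⁻¹*e) * (e*f)
        = e*((f*f)*((e*f)⁻¹*((e*e)*f))) := by simp only [mul_assoc]
      _ = e*(f*((e*f)⁻¹*(e*f))) := by rw [hf, he]
      _ = (e*f)*(e*f)⁻¹*(e*f) := by simp only [mul_assoc]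
      _ = e*f := aia _
  have h2 : (f*(e*f)⁻¹*e) * (e*f) * (f*(e*f)⁻¹*e) = f*(e*f)⁻¹*e := by
    calc (f*(e*f)⁻¹*e) * (e*f) * (f*(e*f)⁻¹*e)
        = f*((e*f)⁻¹*((e*e)*((f*f)*((e*f)⁻¹*e)))) := by simp only [mul_assoc]
      _ = f*((e*f)⁻¹*(e*(f*((e*f)⁻¹*e)))) := by rw [he, hf]
      _ = f*((e*f)⁻¹*(e*f)*(e*f)⁻¹*e) := by simp only [mul_assoc]
      _ = f*((e*f)⁻¹*e) := by rw [iai]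
      _ = f*(e*f)⁻¹*e := by rw [← mul_assoc]
  have hxe : f*(e*f)⁻¹*e = (e*f)⁻¹ := inv_uniq _ _ h1 h2
  have hxx : (e*f)⁻¹ * (e*f)⁻¹ = (e*f)⁻¹ := by
    calc (e*f)⁻¹ * (e*f)⁻¹ = (f*(e*f)⁻¹*e) * (f*(e*f)⁻¹*e) := by rw [hxe]
      _ = f*((e*f)⁻¹*(e*f)*(e*f)⁻¹*e) := by simp only [mul_assoc]
      _ = f*((e*f)⁻¹*e) := by rw [iai]
      _ = f*(e*f)⁻¹*e := by rw [← mul_assoc]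
      _ = (e*f)⁻¹ := hxe
  have hself : e*f = (e*f)⁻¹ := (invinv (e*f)).symm.trans (idem_invS hxx)
  rw [hself]; exact hxx

private lemma idem_comm {e f : S} (he : e * e = e) (hf : f * f = f) : e * f = f * e := by
  have hef := idem_mul_idem he hf
  have hfe := idem_mul_idem hf he
  have h1 : (e*f)*(f*e)*(e*f) = e*f := by
    calc (e*f)*(f*e)*(e*f) = e*((f*f)*((e*e)*f)) := by simp only [mul_assoc]
      _ = e*(f*(e*f)) := by rw [hf, he]
      _ = (e*f)*(e*f) := by simp only [mul_assoc]
      _ = e*f := hef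
  have h2 : (f*e)*(e*f)*(f*e) = f*e := by
    calc (f*e)*(e*f)*(f*e) = f*((e*e)*((f*f)*e)) := by simp only [mul_assoc]
      _ = f*(e*(f*e)) := by rw [he, hf]
      _ = (f*e)*(f*e) := by simp only [mul_assoc]
      _ = f*e := hfe
  have h3 : f*e = (e*f)⁻¹ := inv_uniq _ _ h1 h2
  rw [h3, idem_invS hef]

private lemma nle_refl (a : S) : nle a a := ⟨a * a⁻¹, idem_dd a, (aia a).symm⟩

private lemma nle_trans {a b c : S} (h1 : nle a b) (h2 : nle b c) : nle a c := by
  obtain ⟨e, he, hab⟩ := h1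
  obtain ⟨f, hf, hbc⟩ := h2
  exact ⟨e * f, idem_mul_idem he hf, by rw [hab, hbc, mul_assoc]⟩

private lemma nle_zero {a : S} (h : nle a 0) : a = 0 := by
  obtain ⟨e, _, ha⟩ := h
  rw [ha, InverseMonoidWithZero.mul_zero']

private lemma nle_right {a b : S} (h : nle a b) : ∃ f, f * f = f ∧ a = b * f := by
  obtain ⟨e, he, ha⟩ := h
  refine ⟨b⁻¹*e*b, ?_, ?_⟩
  · calc (b⁻¹*e*b)*(b⁻¹*e*b)
        = b⁻¹*(e*((b*b⁻¹)*e)*b) := by simp only [mul_assoc]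
      _ = b⁻¹*(e*(e*(b*b⁻¹))*b) := by rw [idem_comm (idem_dd b) he]
      _ = b⁻¹*((e*e)*(b*b⁻¹*b)) := by simp only [mul_assoc]
      _ = b⁻¹*(e*b) := by rw [he, aia]
      _ = b⁻¹*e*b := by rw [← mul_assoc]
  · calc a = e*b := ha
      _ = e*(b*b⁻¹*b) := by rw [aia]
      _ = (e*(b*b⁻¹))*b := by simp only [mul_assoc]
      _ = ((b*b⁻¹)*e)*b := by rw [idem_comm he (idem_dd b)]
      _ = b*(b⁻¹*e*b) := by simp only [mul_assoc]

private lemma nright_to_nle {a b f : S} (hf : f * f = f) (ha : a = b * f) : nle a b := by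
  refine ⟨b*f*b⁻¹, ?_, ?_⟩
  · calc (b*f*b⁻¹)*(b*f*b⁻¹)
        = b*(f*(b⁻¹*b)*(f*b⁻¹)) := by simp only [mul_assoc]
      _ = b*((b⁻¹*b)*f*(f*b⁻¹)) := by rw [idem_comm hf (idem_rr b)]
      _ = (b*b⁻¹*b)*(f*f)*b⁻¹ := by simp only [mul_assoc]
      _ = b*f*b⁻¹ := by rw [aia, hf]
  · calc a = b*f := ha
      _ = (b*b⁻¹*b)*f := by rw [aia]
      _ = b*((b⁻¹*b)*f) := by simp only [mul_assoc]
      _ = b*(f*(b⁻¹*b)) := by rw [idem_comm (idem_rr b) hf]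
      _ = (b*f*b⁻¹)*b := by simp only [mul_assoc]

private lemma nle_mul {a b x y : S} (h1 : nle a x) (h2 : nle b y) : nle (a*b) (x*y) := by
  obtain ⟨e, he, ha⟩ := h1
  obtain ⟨f, hf, hb⟩ := nle_right h2
  have hab : a*b = e*(x*y*f) := by rw [ha, hb]; simp only [mul_assoc]
  have h3 : nle (e*(x*y*f)) (x*y*f) := ⟨e, he, rfl⟩
  have h4 : nle (x*y*f) (x*y) := nright_to_nle hf rfl
  rw [hab]
  exact nle_trans h3 h4

private lemma nle_inv {a x : S} (h : nle a x) : nle a⁻¹ x⁻¹ := by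
  obtain ⟨e, he, ha⟩ := h
  have h1 : (e*x)*(x⁻¹*e)*(e*x) = e*x := by
    calc (e*x)*(x⁻¹*e)*(e*x)
        = e*((x*x⁻¹)*((e*e)*x)) := by simp only [mul_assoc]
      _ = e*((x*x⁻¹)*(e*x)) := by rw [he]
      _ = e*((x*x⁻¹)*e)*x := by simp only [mul_assoc]
      _ = e*(e*(x*x⁻¹))*x := by rw [idem_comm (idem_dd x) he]
      _ = (e*e)*(x*x⁻¹*x) := by simp only [mul_assoc]
      _ = e*x := by rw [he, aia]
  have h2 : (x⁻¹*e)*(e*x)*(x⁻¹*e) = x⁻¹*e := by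
    calc (x⁻¹*e)*(e*x)*(x⁻¹*e)
        = x⁻¹*((e*e)*(x*(x⁻¹*e))) := by simp only [mul_assoc]
      _ = x⁻¹*(e*(x*(x⁻¹*e))) := by rw [he]
      _ = x⁻¹*(e*(x*x⁻¹))*e := by simp only [mul_assoc]
      _ = x⁻¹*((x*x⁻¹)*e)*e := by rw [idem_comm he (idem_dd x)]
      _ = (x⁻¹*x*x⁻¹)*(e*e) := by simp only [mul_assoc]
      _ = x⁻¹*e := by rw [iai, he]
  have h3 : x⁻¹*e = (e*x)⁻¹ := inv_uniq _ _ h1 h2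
  have ha' : a⁻¹ = x⁻¹*e := by rw [ha, ← h3]
  exact nright_to_nle he ha'

private lemma isUnit_invS {x : S} (h : IsUnit x) : IsUnit x⁻¹ := by
  obtain ⟨u, hu⟩ := h
  have h1 : x * ↑u⁻¹ * x = x := by rw [← hu, Units.mul_inv, one_mul]
  have h2 : (↑u⁻¹ : S) * x * ↑u⁻¹ = ↑u⁻¹ := by rw [← hu, Units.inv_mul, one_mul]
  have h3 : (↑u⁻¹ : S) = x⁻¹ := inv_uniq _ _ h1 h2
  exact ⟨u⁻¹, h3⟩

end CosetAux

section CosetAux2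

variable {S : Type u} [BooleanInverseMeetMonoid S]

private lemma binf_le_left (a b : S) : nle (binf a b) a :=
  BooleanInverseMeetMonoid.inf_le_left a b

private lemma binf_le_right (a b : S) : nle (binf a b) b :=
  BooleanInverseMeetMonoid.inf_le_right a b

private lemma le_binf {a b c : S} (h1 : nle c a) (h2 : nle c b) : nle c (binf a b) :=
  BooleanInverseMeetMonoid.le_inf a b c h1 h2

end CosetAux2

/-- Let `A` be an ultrafilter in a Boolean inverse ∧-monoid
with group of units `G`. If `X = A ∩ G` is non-empty then `X X⁻¹ X = X`, i.e.
`X` is a coset of a subgroup of `G`. -/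
theorem statement12 (S : Type u) [BooleanInverseMeetMonoid S]
    (A : Set S) (hA : IsMUltrafilter A)
    (hne : (A ∩ {g : S | IsUnit g}).Nonempty) :
    {z : S | ∃ x ∈ A ∩ {g : S | IsUnit g}, ∃ y ∈ A ∩ {g : S | IsUnit g},
        ∃ w ∈ A ∩ {g : S | IsUnit g}, z = x * y⁻¹ * w} =
      A ∩ {g : S | IsUnit g} := by
  obtain ⟨hAfil, h0A, hmax⟩ := hA
  obtain ⟨hAne, hAmeet, hAup⟩ := hAfil
  ext z
  simp only [Set.mem_setOf_eq, Set.mem_inter_iff]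
  constructor
  · rintro ⟨x, ⟨hxA, hxU⟩, y, ⟨hyA, hyU⟩, w, ⟨hwA, hwU⟩, rfl⟩
    refine ⟨?_, (hxU.mul (isUnit_invS hyU)).mul hwU⟩
    have key : ∀ a ∈ A, binf (x * y⁻¹ * w) a ≠ (0 : S) := by
      intro a haA h0
      have hbA : binf x (binf y (binf w a)) ∈ A :=
        hAmeet x hxA _ (hAmeet y hyA _ (hAmeet w hwA a haA))
      have hbx : nle (binf x (binf y (binf w a))) x := binf_le_left _ _
      have hby : nle (binf x (binf y (binf w a))) y :=
        nle_trans (binf_le_right _ _) (binf_le_left _ _)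
      have hbw : nle (binf x (binf y (binf w a))) w :=
        nle_trans (binf_le_right _ _) (nle_trans (binf_le_right _ _) (binf_le_left _ _))
      have hba : nle (binf x (binf y (binf w a))) a :=
        nle_trans (binf_le_right _ _) (nle_trans (binf_le_right _ _) (binf_le_right _ _))
      have hbz : nle (binf x (binf y (binf w a))) (x * y⁻¹ * w) := by
        have h := nle_mul (nle_mul hbx (nle_inv hby)) hbw
        rwa [aia] at h
      have hb0 : nle (binf x (binf y (binf w a))) (binf (x * y⁻¹ * w) a) :=
        le_binf hbz hba
      rw [h0] at hb0
      rw [nle_zero hb0] at hbA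
      exact h0A hbA
    set B : Set S := {t | ∃ a ∈ A, nle (binf (x * y⁻¹ * w) a) t} with hB
    have hBfil : IsMFilter B := by
      refine ⟨?_, ?_, ?_⟩
      · obtain ⟨a0, ha0⟩ := hAne
        exact ⟨x * y⁻¹ * w, a0, ha0, binf_le_left _ _⟩
      · rintro t ⟨a, haA, hat⟩ t' ⟨a', ha'A, hat'⟩
        refine ⟨binf a a', hAmeet a haA a' ha'A, ?_⟩
        have h1 : nle (binf (x * y⁻¹ * w) (binf a a')) t :=
          nle_trans (le_binf (binf_le_left _ _)
            (nle_trans (binf_le_right _ _) (binf_le_left _ _))) hat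
        have h2 : nle (binf (x * y⁻¹ * w) (binf a a')) t' :=
          nle_trans (le_binf (binf_le_left _ _)
            (nle_trans (binf_le_right _ _) (binf_le_right _ _))) hat'
        exact le_binf h1 h2
      · rintro t ⟨a, haA, hat⟩ t' htt'
        exact ⟨a, haA, nle_trans hat htt'⟩
    have h0B : (0 : S) ∉ B := by
      rintro ⟨a, haA, ha0⟩
      exact key a haA (nle_zero ha0)
    have hAB : A ⊆ B := fun a haA => ⟨a, haA, binf_le_right _ _⟩
    have hzB : x * y⁻¹ * w ∈ B := by
      obtain ⟨a0, ha0⟩ := hAne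
      exact ⟨a0, ha0, binf_le_left _ _⟩
    rw [hmax B hBfil h0B hAB]
    exact hzB
  · rintro ⟨hzA, hzU⟩
    exact ⟨z, ⟨hzA, hzU⟩, z, ⟨hzA, hzU⟩, z, ⟨hzA, hzU⟩, (aia z).symm⟩
end

section
/- Let S be a Boolean inverse ∧-monoid. (1) If a, b ∈ S satisfy \overline{φ(a)}·\overline{φ(b)} = 0 then ab = ba. (2) If g and h are units with σ(g)·σ(h) = 0 then g and h commute. (3) For any units g and h, σ(ghg⁻¹) = g·σ(h)·g⁻¹. -/
universe u

namespace Stmt14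

variable {S : Type u} [BooleanInverseMeetMonoid S]

lemma zmul (a : S) : 0 * a = 0 := InverseMonoidWithZero.zero_mul' a
lemma mulz (a : S) : a * 0 = 0 := InverseMonoidWithZero.mul_zero' a
lemma ama (a : S) : a * a⁻¹ * a = a := InverseMonoidWithZero.mul_inv_mul a
lemma iai (a : S) : a⁻¹ * a * a⁻¹ = a⁻¹ := InverseMonoidWithZero.inv_mul_inv a
lemma invu {a b : S} (h1 : a * b * a = a) (h2 : b * a * b = b) : b = a⁻¹ :=
  InverseMonoidWithZero.inv_unique a b h1 h2

lemma inv_invS (a : S) : a⁻¹⁻¹ = a := (invu (iai a) (ama a)).symm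

lemma idem_inv {e : S} (he : e * e = e) : e⁻¹ = e :=
  (invu (by rw [he, he]) (by rw [he, he])).symm

lemma zero_inv : ((0 : S))⁻¹ = 0 := (invu (by rw [zmul, zmul]) (by rw [zmul, zmul])).symm

lemma idem_aai (a : S) : (a * a⁻¹) * (a * a⁻¹) = a * a⁻¹ := by rw [← mul_assoc, ama]

lemma idem_iaa (a : S) : (a⁻¹ * a) * (a⁻¹ * a) = a⁻¹ * a := by rw [← mul_assoc, iai]

/-- rewrite helper: `p * q = r → p * (q * y) = r * y`. -/
lemma ra {p q r : S} (h : p * q = r) (y : S) : p * (q * y) = r * y := by rw [← mul_assoc, h]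

lemma idem_mul_idem {e f : S} (he : e * e = e) (hf : f * f = f) :
    (e * f) * (e * f) = e * f := by
  set x := (e * f)⁻¹ with hx
  have h2 : x * (e * (f * x)) = x := by
    have h := iai (e * f)
    simp only [mul_assoc] at h
    rw [← hx] at h
    exact h
  have key : f * x * e = x := by
    apply invu
    · calc (e * f) * (f * x * e) * (e * f)
          = e * (f * (f * (x * (e * (e * f))))) := by simp only [mul_assoc]
        _ = e * (f * (x * (e * f))) := by rw [ra hf, ra he]
        _ = e * f := by simpa only [mul_assoc] using ama (e * f)
    · calc (f * x * e) * (e * f) * (f * x * e)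
          = f * (x * (e * (e * (f * (f * (x * e)))))) := by simp only [mul_assoc]
        _ = f * (x * (e * (f * (x * e)))) := by rw [ra he, ra hf]
        _ = f * ((x * (e * (f * x))) * e) := by simp only [mul_assoc]
        _ = f * (x * e) := by rw [h2]
        _ = f * x * e := by simp only [mul_assoc]
  have hxx : x * x = x := by
    calc x * x
        = (f * x * e) * (f * x * e) := by rw [key]
      _ = f * ((x * (e * (f * x))) * e) := by simp only [mul_assoc]
      _ = f * (x * e) := by rw [h2]
      _ = x := by rw [← mul_assoc, key]
  have hef : e * f = x := by
    calc e * f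
        = x⁻¹ := by rw [hx, inv_invS]
      _ = x := idem_inv hxx
  rw [hef, hxx]

lemma idem_comm {e f : S} (he : e * e = e) (hf : f * f = f) : e * f = f * e := by
  have h1 := idem_mul_idem he hf
  have h2 := idem_mul_idem hf he
  have h1' : e * (f * (e * f)) = e * f := by simpa only [mul_assoc] using h1
  have h2' : f * (e * (f * e)) = f * e := by simpa only [mul_assoc] using h2
  have A : (e * f) * (f * e) * (e * f) = e * f := by
    calc (e * f) * (f * e) * (e * f)
        = e * (f * (f * (e * (e * f)))) := by simp only [mul_assoc]
      _ = e * (f * (e * (e * f))) := by rw [ra hf]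
      _ = e * (f * (e * f)) := by rw [ra he]
      _ = e * f := h1'
  have B : (f * e) * (e * f) * (f * e) = f * e := by
    calc (f * e) * (e * f) * (f * e)
        = f * (e * (e * (f * (f * e)))) := by simp only [mul_assoc]
      _ = f * (e * (f * (f * e))) := by rw [ra he]
      _ = f * (e * (f * e)) := by rw [ra hf]
      _ = f * e := h2'
  have := invu A B
  rw [idem_inv h1] at this
  exact this.symm

lemma minv (a b : S) : (a * b)⁻¹ = b⁻¹ * a⁻¹ := by
  have hc := idem_comm (idem_aai b) (idem_iaa a)
  have A : (a * b) * (b⁻¹ * a⁻¹) * (a * b) = a * b := by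
    calc (a * b) * (b⁻¹ * a⁻¹) * (a * b)
        = a * ((b * b⁻¹) * ((a⁻¹ * a) * b)) := by simp only [mul_assoc]
      _ = a * (((a⁻¹ * a) * (b * b⁻¹)) * b) := by rw [ra hc]
      _ = a * ((a⁻¹ * a) * ((b * b⁻¹) * b)) := by simp only [mul_assoc]
      _ = a * b := by rw [ama b, ← mul_assoc, ← mul_assoc, ama a]
  have B : (b⁻¹ * a⁻¹) * (a * b) * (b⁻¹ * a⁻¹) = b⁻¹ * a⁻¹ := by
    calc (b⁻¹ * a⁻¹) * (a * b) * (b⁻¹ * a⁻¹)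
        = b⁻¹ * ((a⁻¹ * a) * ((b * b⁻¹) * a⁻¹)) := by simp only [mul_assoc]
      _ = b⁻¹ * (((b * b⁻¹) * (a⁻¹ * a)) * a⁻¹) := by rw [ra hc.symm]
      _ = b⁻¹ * ((b * b⁻¹) * ((a⁻¹ * a) * a⁻¹)) := by simp only [mul_assoc]
      _ = b⁻¹ * a⁻¹ := by rw [iai a, ← mul_assoc, ← mul_assoc, iai b]
  exact (invu A B).symm

/- ## the natural partial order -/

lemma nle_refl (a : S) : nle a a := ⟨a * a⁻¹, idem_aai a, (ama a).symm⟩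

lemma zero_nle (a : S) : nle 0 a := ⟨0, zmul 0, (zmul a).symm⟩

lemma nle_zero {a : S} (h : nle a 0) : a = 0 := by
  obtain ⟨e, -, h⟩ := h; rw [h, mulz]

lemma nle_trans {a b c : S} (h1 : nle a b) (h2 : nle b c) : nle a c := by
  obtain ⟨e, he, hab⟩ := h1
  obtain ⟨f, hf, hbc⟩ := h2
  exact ⟨e * f, idem_mul_idem he hf, by rw [hab, hbc, mul_assoc]⟩

lemma nle_elim {a b : S} (h : nle a b) : a = (a * a⁻¹) * b := by
  obtain ⟨e, he, rfl⟩ := h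
  rw [minv, idem_inv he]
  have hc := idem_comm (idem_aai b) he
  symm
  calc (e * b) * (b⁻¹ * e) * b
      = e * (((b * b⁻¹) * e) * b) := by simp only [mul_assoc]
    _ = e * ((e * (b * b⁻¹)) * b) := by rw [hc]
    _ = e * (e * ((b * b⁻¹) * b)) := by simp only [mul_assoc]
    _ = e * (e * b) := by rw [ama]
    _ = e * b := ra he b

lemma nle_right {a b : S} (h : nle a b) : a = b * (a⁻¹ * a) := by
  have hq := idem_aai a
  have hel := nle_elim h
  set q := a * a⁻¹ with hqdef
  have hinv : a⁻¹ = b⁻¹ * q := by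
    conv_lhs => rw [hel]
    rw [minv, idem_inv hq]
  have hc := idem_comm (idem_aai b) hq
  symm
  calc b * (a⁻¹ * a)
      = b * ((b⁻¹ * q) * (q * b)) := by rw [hinv, hel]
    _ = ((b * b⁻¹) * (q * q)) * b := by simp only [mul_assoc]
    _ = ((b * b⁻¹) * q) * b := by rw [hq]
    _ = (q * (b * b⁻¹)) * b := by rw [hc]
    _ = q * (b * b⁻¹ * b) := by simp only [mul_assoc]
    _ = q * b := by rw [ama]
    _ = a := hel.symm

lemma nle_intro_right {a b f : S} (hf : f * f = f) (h : a = b * f) : nle a b := by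
  have hc := idem_comm (idem_iaa b) hf
  refine ⟨b * f * b⁻¹, ?_, ?_⟩
  · calc (b * f * b⁻¹) * (b * f * b⁻¹)
        = b * (f * ((b⁻¹ * b) * (f * b⁻¹))) := by simp only [mul_assoc]
      _ = b * (f * ((f * (b⁻¹ * b)) * b⁻¹)) := by rw [ra hc]
      _ = b * ((f * f) * ((b⁻¹ * b) * b⁻¹)) := by simp only [mul_assoc]
      _ = b * (f * ((b⁻¹ * b) * b⁻¹)) := by rw [hf]
      _ = b * (f * b⁻¹) := by rw [iai]
      _ = b * f * b⁻¹ := by simp only [mul_assoc]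
  · rw [h]
    symm
    calc (b * f * b⁻¹) * b
        = b * (f * (b⁻¹ * b)) := by simp only [mul_assoc]
      _ = b * ((b⁻¹ * b) * f) := by rw [← hc]
      _ = (b * (b⁻¹ * b)) * f := by simp only [mul_assoc]
      _ = b * f := by rw [show b * (b⁻¹ * b) = b from by rw [← mul_assoc, ama]]

lemma inv_nle {a b : S} (h : nle a b) : nle a⁻¹ b⁻¹ := by
  have hr := nle_right h
  refine ⟨a⁻¹ * a, idem_iaa a, ?_⟩
  conv_lhs => rw [hr]
  rw [minv, idem_inv (idem_iaa a)]

lemma nle_antisymm {a b : S} (h1 : nle a b) (h2 : nle b a) : a = b := by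
  have e1 := nle_elim h1
  have e2 := nle_elim h2
  have hc := idem_comm (idem_aai a) (idem_aai b)
  set p := a * a⁻¹ with hp
  set q := b * b⁻¹ with hq2
  calc a
      = p * b := e1
    _ = p * (q * a) := by rw [e2]
    _ = (q * p) * a := by rw [← mul_assoc, hc]
    _ = q * (p * a) := by rw [mul_assoc]
    _ = q * a := by rw [show p * a = a from ama a]
    _ = b := e2.symm

/- ## compatibility and joins -/

lemma orth_compat {a b : S} (h1 : a * b⁻¹ = 0) (h2 : a⁻¹ * b = 0) : Compat a b :=
  ⟨by rw [h1, zmul], by rw [h2, zmul]⟩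

lemma idem_compat {e f : S} (he : e * e = e) (hf : f * f = f) : Compat e f := by
  constructor
  · rw [idem_inv hf]; exact idem_mul_idem he hf
  · rw [idem_inv he]; exact idem_mul_idem he hf

lemma le_bsup_left {a b : S} (h : Compat a b) : nle a (bsup a b) :=
  DistributiveInverseMonoid.le_sup_left a b h
lemma le_bsup_right {a b : S} (h : Compat a b) : nle b (bsup a b) :=
  DistributiveInverseMonoid.le_sup_right a b h
lemma bsup_le {a b c : S} (h : Compat a b) (h1 : nle a c) (h2 : nle b c) : nle (bsup a b) c :=
  DistributiveInverseMonoid.sup_le a b c h h1 h2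
lemma mul_bsup (c : S) {a b : S} (h : Compat a b) : c * bsup a b = bsup (c * a) (c * b) :=
  DistributiveInverseMonoid.mul_sup a b c h
lemma bsup_mul (c : S) {a b : S} (h : Compat a b) : bsup a b * c = bsup (a * c) (b * c) :=
  DistributiveInverseMonoid.sup_mul a b c h

lemma compat_zero (a : S) : Compat a 0 :=
  ⟨by rw [zero_inv, mulz, zmul], by rw [mulz, zmul]⟩

lemma zero_compat (a : S) : Compat 0 a :=
  ⟨by rw [zmul, zmul], by rw [zero_inv, zmul, zmul]⟩

lemma bsup_zero (a : S) : bsup a 0 = a :=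
  nle_antisymm (bsup_le (compat_zero a) (nle_refl a) (zero_nle a)) (le_bsup_left (compat_zero a))

lemma zero_bsup (a : S) : bsup 0 a = a :=
  nle_antisymm (bsup_le (zero_compat a) (zero_nle a) (nle_refl a)) (le_bsup_right (zero_compat a))

lemma compat_inv {a b : S} (h : Compat a b) : Compat a⁻¹ b⁻¹ := by
  obtain ⟨h1, h2⟩ := h
  constructor
  · rw [inv_invS]; exact h2
  · rw [inv_invS]; exact h1

lemma inv_bsup {a b : S} (h : Compat a b) : (bsup a b)⁻¹ = bsup a⁻¹ b⁻¹ := by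
  have hi := compat_inv h
  apply nle_antisymm
  · have h1 : nle a ((bsup a⁻¹ b⁻¹)⁻¹) := by
      have := inv_nle (le_bsup_left hi)
      rwa [inv_invS] at this
    have h2 : nle b ((bsup a⁻¹ b⁻¹)⁻¹) := by
      have := inv_nle (le_bsup_right hi)
      rwa [inv_invS] at this
    have := inv_nle (bsup_le h h1 h2)
    rwa [inv_invS] at this
  · exact bsup_le hi (inv_nle (le_bsup_left h)) (inv_nle (le_bsup_right h))

/- ## complementation -/

lemma bcompl_idem {e : S} (he : e * e = e) : bcompl e * bcompl e = bcompl e :=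
  BooleanInverseMonoid.compl_idem e he
lemma mul_bcompl {e : S} (he : e * e = e) : e * bcompl e = 0 :=
  BooleanInverseMonoid.mul_compl e he
lemma bsup_bcompl {e : S} (he : e * e = e) : bsup e (bcompl e) = 1 :=
  BooleanInverseMonoid.sup_compl e he
lemma bcompl_mul {e : S} (he : e * e = e) : bcompl e * e = 0 := by
  rw [idem_comm (bcompl_idem he) he, mul_bcompl he]

lemma bcompl_unique {i j : S} (hi : i * i = i) (hj : j * j = j)
    (h0 : i * j = 0) (h1 : bsup i j = 1) : bcompl i = j := by
  have hci := bcompl_idem hi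
  apply nle_antisymm
  · refine ⟨bcompl i, hci, ?_⟩
    calc bcompl i
        = bcompl i * 1 := (mul_one _).symm
      _ = bcompl i * bsup i j := by rw [h1]
      _ = bsup (bcompl i * i) (bcompl i * j) := mul_bsup _ (idem_compat hi hj)
      _ = bcompl i * j := by rw [bcompl_mul hi, zero_bsup]
  · refine ⟨j, hj, ?_⟩
    calc j
        = j * 1 := (mul_one _).symm
      _ = j * bsup i (bcompl i) := by rw [bsup_bcompl hi]
      _ = bsup (j * i) (j * bcompl i) := mul_bsup _ (idem_compat hi hci)
      _ = j * bcompl i := by rw [idem_comm hj hi, h0, zero_bsup]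

/- ## phi -/

lemma binf_le_left (a b : S) : nle (binf a b) a := BooleanInverseMeetMonoid.inf_le_left a b
lemma binf_le_right (a b : S) : nle (binf a b) b := BooleanInverseMeetMonoid.inf_le_right a b
lemma le_binf {a b c : S} (h1 : nle c a) (h2 : nle c b) : nle c (binf a b) :=
  BooleanInverseMeetMonoid.le_inf a b c h1 h2

lemma phi_nle (s : S) : nle (phi s) s := binf_le_left s 1

lemma phi_nle_one (s : S) : nle (phi s) 1 := binf_le_right s 1

lemma phi_idem (s : S) : phi s * phi s = phi s := by
  obtain ⟨e, he, h⟩ := phi_nle_one s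
  rw [mul_one] at h
  rw [h]; exact he

lemma phi_mul (s : S) : phi s * s = phi s := by
  have h := nle_elim (phi_nle s)
  rw [idem_inv (phi_idem s), phi_idem s] at h
  exact h.symm

lemma mul_phi (s : S) : s * phi s = phi s := by
  have h := nle_right (phi_nle s)
  rw [idem_inv (phi_idem s), phi_idem s] at h
  exact h.symm

lemma phi_mul_inv (s : S) : phi s * s⁻¹ = phi s := by
  have h : nle (phi s) s⁻¹ := by
    have := inv_nle (phi_nle s)
    rwa [idem_inv (phi_idem s)] at this
  have h2 := nle_elim h
  rw [idem_inv (phi_idem s), phi_idem s] at h2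
  exact h2.symm

/- ## facts about e = bcompl (phi a) -/

section Supp

variable (a : S)

lemma suppc_idem : bcompl (phi a) * bcompl (phi a) = bcompl (phi a) :=
  bcompl_idem (phi_idem a)

lemma phi_suppc : phi a * bcompl (phi a) = 0 := mul_bcompl (phi_idem a)
lemma suppc_phi : bcompl (phi a) * phi a = 0 := bcompl_mul (phi_idem a)

lemma mul_suppc : a * bcompl (phi a) = bcompl (phi a) * a := by
  set e := bcompl (phi a) with hedef
  have he := suppc_idem a
  have hpe := phi_suppc a
  have hep := suppc_phi a
  have hC1 : Compat (phi a) e := idem_compat (phi_idem a) he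
  have hx1 : a = bsup (phi a) (a * e) := by
    calc a
        = a * 1 := (mul_one a).symm
      _ = a * bsup (phi a) e := by rw [bsup_bcompl (phi_idem a)]
      _ = bsup (a * phi a) (a * e) := mul_bsup a hC1
      _ = bsup (phi a) (a * e) := by rw [mul_phi]
  have hx2 : a = bsup (phi a) (e * a) := by
    calc a
        = 1 * a := (one_mul a).symm
      _ = bsup (phi a) e * a := by rw [bsup_bcompl (phi_idem a)]
      _ = bsup (phi a * a) (e * a) := bsup_mul a hC1
      _ = bsup (phi a) (e * a) := by rw [phi_mul]
  have hCae : Compat (phi a) (a * e) := by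
    apply orth_compat
    · rw [minv, idem_inv he, ← mul_assoc, phi_suppc, zmul]
    · rw [idem_inv (phi_idem a), ← mul_assoc, phi_mul, phi_suppc]
  have hCea : Compat (phi a) (e * a) := by
    apply orth_compat
    · rw [minv, idem_inv he, ← mul_assoc, phi_mul_inv, phi_suppc]
    · rw [idem_inv (phi_idem a), ← mul_assoc, phi_suppc, zmul]
  have h1 : e * a = e * a * e := by
    calc e * a
        = e * bsup (phi a) (a * e) := by rw [← hx1]
      _ = bsup (e * phi a) (e * (a * e)) := mul_bsup e hCae
      _ = e * (a * e) := by rw [hep, zero_bsup]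
      _ = e * a * e := by rw [← mul_assoc]
  have h2 : a * e = e * a * e := by
    calc a * e
        = bsup (phi a) (e * a) * e := by rw [← hx2]
      _ = bsup (phi a * e) (e * a * e) := bsup_mul e hCea
      _ = e * a * e := by rw [phi_suppc, zero_bsup]
  rw [h1, h2]

end Supp

/- ## Part 1 -/

lemma part1 (a b : S) (h : bcompl (phi a) * bcompl (phi b) = 0) : a * b = b * a := by
  set e := bcompl (phi a) with hedef
  set f := bcompl (phi b) with hfdef
  have pa := phi_idem a
  have pb := phi_idem b
  have he : e * e = e := suppc_idem a
  have hf : f * f = f := suppc_idem b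
  have hpae : phi a * e = 0 := phi_suppc a
  have hepa : e * phi a = 0 := suppc_phi a
  have hpbf : phi b * f = 0 := phi_suppc b
  have hfpb : f * phi b = 0 := suppc_phi b
  have hef : e * f = 0 := h
  have hfe : f * e = 0 := by rw [idem_comm hf he]; exact h
  have hepb : e * phi b = e := by
    have h1 : e = e * phi b := by
      calc e
          = e * 1 := (mul_one e).symm
        _ = e * bsup (phi b) f := by rw [bsup_bcompl pb]
        _ = bsup (e * phi b) (e * f) := mul_bsup e (idem_compat pb hf)
        _ = e * phi b := by rw [hef, bsup_zero]
    exact h1.symm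
  have hpbe : phi b * e = e := by rw [idem_comm pb he, hepb]
  have hfpa : f * phi a = f := by
    have h1 : f = f * phi a := by
      calc f
          = f * 1 := (mul_one f).symm
        _ = f * bsup (phi a) e := by rw [bsup_bcompl pa]
        _ = bsup (f * phi a) (f * e) := mul_bsup f (idem_compat pa he)
        _ = f * phi a := by rw [hfe, bsup_zero]
    exact h1.symm
  have hpaf : phi a * f = f := by rw [idem_comm pa hf, hfpa]
  have hbe : b * e = e := by rw [← hpbe, ← mul_assoc, mul_phi, hpbe]
  have heb : e * b = e := by rw [← hepb, mul_assoc, phi_mul, hepb]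
  have haf : a * f = f := by
    rw [← hfpa, idem_comm hf pa, ← mul_assoc, mul_phi, idem_comm pa hf, hfpa]
  have hfa : f * a = f := by rw [← hfpa, mul_assoc, phi_mul, hfpa]
  have hainvf : a⁻¹ * f = f := by
    have h1 : nle f (phi a) := ⟨f, hf, hfpa.symm⟩
    have h2 : nle f a := nle_trans h1 (phi_nle a)
    have h2' : nle f a⁻¹ := by
      have h3 := inv_nle h2
      rwa [idem_inv hf] at h3
    have h3 := nle_right h2'
    rw [idem_inv hf, hf] at h3
    exact h3.symm
  set P := phi a * phi b with hPdef
  have hP : P * P = P := idem_mul_idem pa pb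
  have hPc : phi a * phi b = phi b * phi a := idem_comm pa pb
  have hPf : P * f = 0 := by rw [hPdef, mul_assoc, hpbf, mulz]
  have hPe : P * e = 0 := by rw [hPdef, hPc, mul_assoc, hpae, mulz]
  have heP : e * P = 0 := by rw [hPdef, ← mul_assoc, hepa, zmul]
  have hfP : f * P = 0 := by rw [hPdef, ← mul_assoc, hfpa, hfpb]
  have haP : a * P = P := by rw [hPdef, ← mul_assoc, mul_phi]
  have hPa : P * a = P := by rw [hPdef, hPc, mul_assoc, phi_mul, ← hPc]
  have hbP : b * P = P := by rw [hPdef, hPc, ← mul_assoc, mul_phi, ← hPc]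
  have hPb : P * b = P := by rw [hPdef, mul_assoc, phi_mul]
  have hCPe : Compat P e := idem_compat hP he
  have key : (1 : S) = bsup (bsup P e) f := by
    calc (1 : S)
        = 1 * 1 := (mul_one 1).symm
      _ = bsup (phi b) f * bsup (phi a) e := by rw [bsup_bcompl pb, bsup_bcompl pa]
      _ = bsup (phi b * bsup (phi a) e) (f * bsup (phi a) e) := bsup_mul _ (idem_compat pb hf)
      _ = bsup (bsup (phi b * phi a) (phi b * e)) (bsup (f * phi a) (f * e)) := by
          rw [mul_bsup (phi b) (idem_compat pa he), mul_bsup f (idem_compat pa he)]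
      _ = bsup (bsup P e) f := by rw [← hPc, hpbe, hfe, bsup_zero, hfpa]
  have hPainv : P * a⁻¹ = P := by rw [hPdef, hPc, mul_assoc, phi_mul_inv]
  have hPae0 : P * (a * e) = 0 := by rw [← mul_assoc, hPa, hPe]
  have hPaie0 : P * (a⁻¹ * e) = 0 := by rw [← mul_assoc, hPainv, hPe]
  have hPea0 : P * (e * a) = 0 := by rw [← mul_assoc, hPe, zmul]
  have hPeainv0 : P * (e * a⁻¹) = 0 := by rw [← mul_assoc, hPe, zmul]
  have hCPae : Compat P (a * e) :=
    orth_compat (by rw [minv, idem_inv he, hPeainv0]) (by rw [idem_inv hP, hPae0])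
  have hCPea : Compat P (e * a) :=
    orth_compat (by rw [minv, idem_inv he, hPaie0]) (by rw [idem_inv hP, hPea0])
  have hCPeainv : Compat P (e * a⁻¹) :=
    orth_compat (by rw [minv, inv_invS, idem_inv he, hPae0]) (by rw [idem_inv hP, hPeainv0])
  have hCsPe_f : Compat (bsup P e) f := by
    apply orth_compat
    · rw [idem_inv hf, bsup_mul f hCPe, hPf, hef, bsup_zero]
    · rw [inv_bsup hCPe, idem_inv hP, idem_inv he, bsup_mul f hCPe, hPf, hef, bsup_zero]
  have hCsPae_f : Compat (bsup P (a * e)) f := by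
    apply orth_compat
    · rw [idem_inv hf, bsup_mul f hCPae, hPf, mul_assoc, hef, mulz, bsup_zero]
    · rw [inv_bsup hCPae, idem_inv hP, minv, idem_inv he, bsup_mul f hCPeainv, hPf,
        mul_assoc, hainvf, hef, bsup_zero]
  have hCsPe_bf : Compat (bsup P e) (b * f) := by
    apply orth_compat
    · rw [minv, idem_inv hf, bsup_mul _ hCPe, ← mul_assoc, hPf, zmul, ← mul_assoc, hef,
        zmul, bsup_zero]
    · rw [inv_bsup hCPe, idem_inv hP, idem_inv he, bsup_mul _ hCPe, ← mul_assoc, hPb,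
        hPf, ← mul_assoc, heb, hef, bsup_zero]
  have hab : a * b = bsup (bsup P (a * e)) (f * b) := by
    calc a * b
        = a * 1 * b := by rw [mul_one]
      _ = a * bsup (bsup P e) f * b := by rw [← key]
      _ = bsup (a * bsup P e) (a * f) * b := by rw [mul_bsup a hCsPe_f]
      _ = bsup (bsup (a * P) (a * e)) f * b := by rw [mul_bsup a hCPe, haf]
      _ = bsup (bsup P (a * e)) f * b := by rw [haP]
      _ = bsup (bsup P (a * e) * b) (f * b) := bsup_mul b hCsPae_f
      _ = bsup (bsup (P * b) (a * e * b)) (f * b) := by rw [bsup_mul b hCPae]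
      _ = bsup (bsup P (a * e)) (f * b) := by rw [hPb, mul_assoc, heb]
  have hba : b * a = bsup (bsup P (e * a)) (b * f) := by
    calc b * a
        = b * 1 * a := by rw [mul_one]
      _ = b * bsup (bsup P e) f * a := by rw [← key]
      _ = bsup (b * bsup P e) (b * f) * a := by rw [mul_bsup b hCsPe_f]
      _ = bsup (bsup (b * P) (b * e)) (b * f) * a := by rw [mul_bsup b hCPe]
      _ = bsup (bsup P e) (b * f) * a := by rw [hbP, hbe]
      _ = bsup (bsup P e * a) (b * f * a) := bsup_mul a hCsPe_bf
      _ = bsup (bsup (P * a) (e * a)) (b * f * a) := by rw [bsup_mul a hCPe]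
      _ = bsup (bsup P (e * a)) (b * f) := by rw [hPa, mul_assoc, hfa]
  rw [hab, hba, mul_suppc a, ← hedef, mul_suppc b, ← hfdef]

/- ## units -/

lemma unit_inv {g : S} (hg : IsUnit g) : g * g⁻¹ = 1 ∧ g⁻¹ * g = 1 := by
  obtain ⟨u, rfl⟩ := hg
  have h : ((u⁻¹ : Sˣ) : S) = ((u : S))⁻¹ := by
    apply invu
    · rw [Units.mul_inv, one_mul]
    · rw [Units.inv_mul, one_mul]
  constructor
  · rw [← h]; exact u.mul_inv
  · rw [← h]; exact u.inv_mul

lemma sigma_unit {g : S} (hg : IsUnit g) : sigma g = bcompl (phi g) := by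
  unfold sigma
  rw [(unit_inv hg).2, mul_one]

lemma part2 (g h : S) (hg : IsUnit g) (hh : IsUnit h) (hs : sigma g * sigma h = 0) :
    g * h = h * g := by
  apply part1
  rwa [sigma_unit hg, sigma_unit hh] at hs

/- ## Part 3 -/

lemma conj_nle {g gi : S} (hg1 : g * gi = 1) (hg2 : gi * g = 1) {x y : S}
    (h : nle x y) : nle (g * x * gi) (g * y * gi) := by
  obtain ⟨e, he, hx⟩ := h
  refine ⟨g * e * gi, ?_, ?_⟩
  · calc (g * e * gi) * (g * e * gi)
        = g * (e * ((gi * g) * (e * gi))) := by simp only [mul_assoc]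
      _ = g * (e * (e * gi)) := by rw [hg2, one_mul]
      _ = g * e * gi := by rw [ra he]; simp only [mul_assoc]
  · calc g * x * gi
        = g * (e * y) * gi := by rw [hx]
      _ = g * (e * ((gi * g) * (y * gi))) := by rw [hg2, one_mul]; simp only [mul_assoc]
      _ = (g * e * gi) * (g * y * gi) := by simp only [mul_assoc]

lemma conj_idem {g gi e : S} (hg2 : gi * g = 1) (he : e * e = e) :
    (g * e * gi) * (g * e * gi) = g * e * gi := by
  calc (g * e * gi) * (g * e * gi)
      = g * (e * ((gi * g) * (e * gi))) := by simp only [mul_assoc]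
    _ = g * (e * (e * gi)) := by rw [hg2, one_mul]
    _ = g * e * gi := by rw [ra he]; simp only [mul_assoc]

lemma phi_conj {g gi : S} (hg1 : g * gi = 1) (hg2 : gi * g = 1) (t : S) :
    phi (g * t * gi) = g * phi t * gi := by
  apply nle_antisymm
  · have w1 : nle (phi (g * t * gi)) (g * t * gi) := phi_nle _
    have w2 : nle (phi (g * t * gi)) 1 := phi_nle_one _
    have c1 : nle (gi * phi (g * t * gi) * g) t := by
      have h1 := conj_nle hg2 hg1 w1
      rwa [show gi * (g * t * gi) * g = t by
        rw [← mul_assoc, ← mul_assoc, hg2, one_mul, mul_assoc, hg2, mul_one]] at h1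
    have c2 : nle (gi * phi (g * t * gi) * g) 1 := by
      have h1 := conj_nle hg2 hg1 w2
      rwa [mul_one, hg2] at h1
    have c3 : nle (gi * phi (g * t * gi) * g) (phi t) := le_binf c1 c2
    have h1 := conj_nle hg1 hg2 c3
    rwa [show g * (gi * phi (g * t * gi) * g) * gi = phi (g * t * gi) by
      rw [← mul_assoc, ← mul_assoc, hg1, one_mul, mul_assoc, hg1, mul_one]] at h1
  · apply le_binf
    · exact conj_nle hg1 hg2 (phi_nle t)
    · have h1 := conj_nle hg1 hg2 (phi_nle_one t)
      rwa [mul_one, hg1] at h1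

lemma bcompl_conj {g gi e : S} (hg1 : g * gi = 1) (hg2 : gi * g = 1) (he : e * e = e) :
    bcompl (g * e * gi) = g * bcompl e * gi := by
  have hce := bcompl_idem he
  have hinv1 : (g * e)⁻¹ = e * gi := by
    symm; apply invu
    · calc (g * e) * (e * gi) * (g * e)
          = g * (e * (e * ((gi * g) * e))) := by simp only [mul_assoc]
        _ = g * (e * (e * e)) := by rw [hg2, one_mul]
        _ = g * e := by rw [he, he]
    · calc (e * gi) * (g * e) * (e * gi)
          = e * ((gi * g) * (e * (e * gi))) := by simp only [mul_assoc]
        _ = e * (e * (e * gi)) := by rw [hg2, one_mul]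
        _ = e * gi := by rw [ra he, ra he]
  have hinvce : (g * bcompl e)⁻¹ = bcompl e * gi := by
    symm; apply invu
    · calc (g * bcompl e) * (bcompl e * gi) * (g * bcompl e)
          = g * (bcompl e * (bcompl e * ((gi * g) * bcompl e))) := by simp only [mul_assoc]
        _ = g * (bcompl e * (bcompl e * bcompl e)) := by rw [hg2, one_mul]
        _ = g * bcompl e := by rw [hce, hce]
    · calc (bcompl e * gi) * (g * bcompl e) * (bcompl e * gi)
          = bcompl e * ((gi * g) * (bcompl e * (bcompl e * gi))) := by simp only [mul_assoc]
        _ = bcompl e * (bcompl e * (bcompl e * gi)) := by rw [hg2, one_mul]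
        _ = bcompl e * gi := by rw [ra hce, ra hce]
  have hC : Compat (g * e) (g * bcompl e) := by
    apply orth_compat
    · rw [hinvce]
      calc (g * e) * (bcompl e * gi)
          = g * ((e * bcompl e) * gi) := by simp only [mul_assoc]
        _ = 0 := by rw [mul_bcompl he, zmul, mulz]
    · rw [hinv1]
      calc (e * gi) * (g * bcompl e)
          = e * ((gi * g) * bcompl e) := by simp only [mul_assoc]
        _ = 0 := by rw [hg2, one_mul, mul_bcompl he]
  apply bcompl_unique (conj_idem hg2 he) (conj_idem hg2 hce)
  · calc (g * e * gi) * (g * bcompl e * gi)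
        = g * (e * ((gi * g) * (bcompl e * gi))) := by simp only [mul_assoc]
      _ = g * ((e * bcompl e) * gi) := by rw [hg2, one_mul]; simp only [mul_assoc]
      _ = 0 := by rw [mul_bcompl he, zmul, mulz]
  · calc bsup (g * e * gi) (g * bcompl e * gi)
        = bsup (g * e) (g * bcompl e) * gi := (bsup_mul gi hC).symm
      _ = (g * bsup e (bcompl e)) * gi := by rw [mul_bsup g (idem_compat he hce)]
      _ = 1 := by rw [bsup_bcompl he, mul_one, hg1]

lemma part3 (g h : S) (hg : IsUnit g) (hh : IsUnit h) :
    sigma (g * h * g⁻¹) = g * sigma h * g⁻¹ := by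
  obtain ⟨hg1, hg2⟩ := unit_inv hg
  obtain ⟨hh1, hh2⟩ := unit_inv hh
  have hsinv : (g * h * g⁻¹)⁻¹ = g * h⁻¹ * g⁻¹ := by
    symm; apply invu
    · calc (g * h * g⁻¹) * (g * h⁻¹ * g⁻¹) * (g * h * g⁻¹)
          = g * (h * ((g⁻¹ * g) * (h⁻¹ * ((g⁻¹ * g) * (h * g⁻¹))))) := by
            simp only [mul_assoc]
      _ = g * (h * (h⁻¹ * (h * g⁻¹))) := by rw [hg2, one_mul, one_mul]
      _ = g * ((h * h⁻¹ * h) * g⁻¹) := by simp only [mul_assoc]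
      _ = g * h * g⁻¹ := by rw [ama, ← mul_assoc]
    · calc (g * h⁻¹ * g⁻¹) * (g * h * g⁻¹) * (g * h⁻¹ * g⁻¹)
          = g * (h⁻¹ * ((g⁻¹ * g) * (h * ((g⁻¹ * g) * (h⁻¹ * g⁻¹))))) := by
            simp only [mul_assoc]
      _ = g * (h⁻¹ * (h * (h⁻¹ * g⁻¹))) := by rw [hg2, one_mul, one_mul]
      _ = g * ((h⁻¹ * h * h⁻¹) * g⁻¹) := by simp only [mul_assoc]
      _ = g * h⁻¹ * g⁻¹ := by rw [iai, ← mul_assoc]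
  have hss : (g * h * g⁻¹)⁻¹ * (g * h * g⁻¹) = 1 := by
    rw [hsinv]
    calc (g * h⁻¹ * g⁻¹) * (g * h * g⁻¹)
        = g * (h⁻¹ * ((g⁻¹ * g) * (h * g⁻¹))) := by simp only [mul_assoc]
      _ = g * ((h⁻¹ * h) * g⁻¹) := by rw [hg2, one_mul]; simp only [mul_assoc]
      _ = 1 := by rw [hh2, one_mul, hg1]
  have key : sigma (g * h * g⁻¹) = bcompl (phi (g * h * g⁻¹)) := by
    unfold sigma
    rw [hss, mul_one]
  rw [key, sigma_unit hh, phi_conj hg1 hg2 h, bcompl_conj hg1 hg2 (phi_idem h)]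

end Stmt14

/-- In a Boolean inverse ∧-monoid:
(1) if `\overline{φ(a)} ⋅ \overline{φ(b)} = 0` then `ab = ba`;
(2) if `g, h` are units with `σ(g)σ(h) = 0` then `g` and `h` commute;
(3) for units `g, h`, `σ(ghg⁻¹) = g σ(h) g⁻¹`. -/
theorem statement14 (S : Type u) [BooleanInverseMeetMonoid S] :
    (∀ a b : S, bcompl (phi a) * bcompl (phi b) = 0 → a * b = b * a) ∧
    (∀ g h : S, IsUnit g → IsUnit h → sigma g * sigma h = 0 → g * h = h * g) ∧
    (∀ g h : S, IsUnit g → IsUnit h → sigma (g * h * g⁻¹) = g * sigma h * g⁻¹) := by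
  exact ⟨Stmt14.part1, Stmt14.part2, Stmt14.part3⟩
end
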